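/- arXiv:1609.03340 — 6 statements merged into one kernel-verified Lean document; each statement's English description precedes it below -/
import Mathlib

section
/- For finite positive measures μ, ν on ℝ with finite first moments, equal mass, and equal barycenter, the relation μ ≤_c ν (convex order) holds if and only if the potential functions satisfy u_μ(t) ≤ u_ν(t) for all t ∈ ℝ, where u_θ(t) = ∫|x − t| dθ(x). -/
open MeasureTheory

namespace CvxOrdAux


/-- affine line `p.1 + p.2 * x` -/
def lineF (p : ℝ × ℝ) (x : ℝ) : ℝ := p.1 + p.2 * x

/-- hinge function `max (x - t) 0` -/
def hingeF (t x : ℝ) : ℝ := max (x - t) 0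

/-- sum of hinge terms -/
def hsum (hs : List (ℝ × ℝ)) (x : ℝ) : ℝ := (hs.map fun q => q.1 * hingeF q.2 x).sum

def csum (hs : List (ℝ × ℝ)) : ℝ := (hs.map Prod.fst).sum

def repF (a b : ℝ) (hs : List (ℝ × ℝ)) (x : ℝ) : ℝ := a + b * x + hsum hs x

lemma hsum_nil (x : ℝ) : hsum [] x = 0 := rfl

lemma hsum_cons (q : ℝ × ℝ) (hs : List (ℝ × ℝ)) (x : ℝ) :
    hsum (q :: hs) x = q.1 * hingeF q.2 x + hsum hs x := rfl

lemma csum_cons (q : ℝ × ℝ) (hs : List (ℝ × ℝ)) : csum (q :: hs) = q.1 + csum hs := rfl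

lemma hingeF_sub_le {t x y : ℝ} (hxy : x ≤ y) : hingeF t y - hingeF t x ≤ y - x := by
  unfold hingeF
  rcases le_total (x - t) 0 with h | h <;> rcases le_total (y - t) 0 with h' | h' <;>
    simp [max_eq_left, max_eq_right, h, h'] <;> linarith

lemma hingeF_mono {t x y : ℝ} (hxy : x ≤ y) : hingeF t x ≤ hingeF t y :=
  max_le_max (by linarith) le_rfl

lemma hingeF_nonneg (t x : ℝ) : 0 ≤ hingeF t x := le_max_right _ _

/-- upper slope bound for hinge sums -/
lemma hsum_sub_le {hs : List (ℝ × ℝ)} (hc : ∀ q ∈ hs, 0 ≤ q.1) {x y : ℝ} (hxy : x ≤ y) :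
    hsum hs y - hsum hs x ≤ csum hs * (y - x) := by
  induction hs with
  | nil => simp [hsum_nil, csum]
  | cons q hs ih =>
    have hq : 0 ≤ q.1 := hc q (by simp)
    have h1 : q.1 * hingeF q.2 y - q.1 * hingeF q.2 x ≤ q.1 * (y - x) := by
      have := hingeF_sub_le (t := q.2) hxy
      nlinarith
    have h2 := ih (fun r hr => hc r (by simp [hr]))
    simp only [hsum_cons, csum_cons]
    nlinarith

/-- for `x ≤ t`, hinges with threshold `> t` vanish -/
lemma hsum_filter {hs : List (ℝ × ℝ)} {t x : ℝ} (hx : x ≤ t) :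
    hsum (hs.filter fun q => q.2 ≤ t) x = hsum hs x := by
  induction hs with
  | nil => simp [hsum_nil]
  | cons q hs ih =>
    by_cases h : q.2 ≤ t
    · simp only [List.filter_cons, decide_eq_true_eq, h, if_true, hsum_cons, ih]
    · have : hingeF q.2 x = 0 := by
        unfold hingeF; rw [max_eq_right]; push_neg at h; linarith
      simp only [List.filter_cons, decide_eq_true_eq, h, if_false, hsum_cons, ih, this,
        mul_zero, zero_add]

/-- linear growth of hinge sum above all thresholds -/
lemma hsum_above {hs : List (ℝ × ℝ)} {t x : ℝ} (hall : ∀ q ∈ hs, q.2 ≤ t) (hx : t ≤ x) :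
    hsum hs x = hsum hs t + csum hs * (x - t) := by
  induction hs with
  | nil => simp [hsum_nil, csum]
  | cons q hs ih =>
    have hq : q.2 ≤ t := hall q (by simp)
    have h1 : hingeF q.2 x = hingeF q.2 t + (x - t) := by
      unfold hingeF
      rw [max_eq_left (by linarith), max_eq_left (by linarith)]
      ring
    rw [hsum_cons, hsum_cons, ih (fun r hr => hall r (by simp [hr])), h1, csum_cons]
    ring

lemma csum_nonneg {hs : List (ℝ × ℝ)} (hc : ∀ q ∈ hs, 0 ≤ q.1) : 0 ≤ csum hs := by
  induction hs with
  | nil => simp [csum]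
  | cons q hs ih =>
    have := hc q (by simp)
    have := ih (fun r hr => hc r (by simp [hr]))
    rw [csum_cons]; linarith

lemma csum_filter_le {hs : List (ℝ × ℝ)} (hc : ∀ q ∈ hs, 0 ≤ q.1) (P : ℝ × ℝ → Bool) :
    csum (hs.filter P) ≤ csum hs := by
  induction hs with
  | nil => simp [csum]
  | cons q hs ih =>
    have hq := hc q (by simp)
    have h2 := ih (fun r hr => hc r (by simp [hr]))
    by_cases h : P q
    · rw [List.filter_cons, if_pos h, csum_cons, csum_cons]; linarith
    · rw [List.filter_cons, if_neg h, csum_cons]; linarith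

lemma continuous_hsum (hs : List (ℝ × ℝ)) : Continuous (hsum hs) := by
  induction hs with
  | nil => exact (continuous_const : Continuous fun _ : ℝ => (0:ℝ))
  | cons q hs ih =>
    have : Continuous fun x => q.1 * hingeF q.2 x :=
      continuous_const.mul ((continuous_id.sub continuous_const).max continuous_const)
    exact (this.add ih)

lemma continuous_repF (a b : ℝ) (hs : List (ℝ × ℝ)) : Continuous (repF a b hs) :=
  (continuous_const.add (continuous_const.mul continuous_id)).add (continuous_hsum hs)



/-- max of a list of lines (0 for the empty list) -/
def maxL : List (ℝ × ℝ) → ℝ → ℝ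
  | [], _ => 0
  | [p], x => lineF p x
  | p :: q :: l, x => max (lineF p x) (maxL (q :: l) x)

lemma maxL_single (p : ℝ × ℝ) (x : ℝ) : maxL [p] x = lineF p x := rfl

lemma maxL_cons (p q : ℝ × ℝ) (l : List (ℝ × ℝ)) (x : ℝ) :
    maxL (p :: q :: l) x = max (lineF p x) (maxL (q :: l) x) := rfl

lemma le_maxL {l : List (ℝ × ℝ)} {q : ℝ × ℝ} (hq : q ∈ l) (x : ℝ) :
    lineF q x ≤ maxL l x := by
  induction l with
  | nil => simp at hq
  | cons p l ih =>
    match l, ih with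
    | [], _ => simp at hq; subst hq; simp [maxL_single]
    | r :: l', ih =>
      rw [maxL_cons]
      rcases List.mem_cons.1 hq with h | h
      · subst h; exact le_max_left _ _
      · exact le_trans (ih h) (le_max_right _ _)

lemma maxL_le {l : List (ℝ × ℝ)} (hl : l ≠ []) {x c : ℝ}
    (h : ∀ q ∈ l, lineF q x ≤ c) : maxL l x ≤ c := by
  induction l with
  | nil => simp at hl
  | cons p l ih =>
    match l, ih with
    | [], _ => simpa [maxL_single] using h p (by simp)
    | r :: l', ih =>
      rw [maxL_cons]
      exact max_le (h p (by simp)) (ih (by simp) fun q hq => h q (by simp [hq]))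

lemma maxL_mem {l : List (ℝ × ℝ)} (hl : l ≠ []) (x : ℝ) :
    ∃ q ∈ l, maxL l x = lineF q x := by
  induction l with
  | nil => simp at hl
  | cons p l ih =>
    match l, ih with
    | [], _ => exact ⟨p, by simp, (maxL_single p x).symm ▸ rfl⟩
    | r :: l', ih =>
      obtain ⟨q, hq, hval⟩ := ih (by simp)
      rw [maxL_cons]
      rcases le_total (lineF p x) (maxL (r :: l') x) with h | h
      · exact ⟨q, by simp [hq], by rw [max_eq_right h, hval]⟩
      · exact ⟨p, by simp, by rw [max_eq_left h]⟩

/-- maxL only depends on the set of members -/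
lemma maxL_eq_of_mem_iff {l₁ l₂ : List (ℝ × ℝ)} (h₁ : l₁ ≠ []) (h₂ : l₂ ≠ [])
    (h : ∀ q, q ∈ l₁ ↔ q ∈ l₂) (x : ℝ) : maxL l₁ x = maxL l₂ x := by
  apply le_antisymm
  · obtain ⟨q, hq, hv⟩ := maxL_mem h₁ x
    rw [hv]; exact le_maxL ((h q).1 hq) x
  · obtain ⟨q, hq, hv⟩ := maxL_mem h₂ x
    rw [hv]; exact le_maxL ((h q).2 hq) x

lemma maxL_le_maxL {l₁ l₂ : List (ℝ × ℝ)} (h₁ : l₁ ≠ []) (h : ∀ q ∈ l₁, q ∈ l₂) (x : ℝ) :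
    maxL l₁ x ≤ maxL l₂ x := by
  obtain ⟨q, hq, hv⟩ := maxL_mem h₁ x
  rw [hv]; exact le_maxL (h q hq) x




/-- Every max of finitely many lines, listed with slopes in decreasing order,
is an affine function plus a nonnegative combination of hinge functions. -/
theorem rep_exists : ∀ (l : List (ℝ × ℝ)) (p : ℝ × ℝ),
    (∀ q ∈ l, q.2 ≤ p.2) → l.Pairwise (fun q r => r.2 ≤ q.2) →
    ∃ a b hs, (∀ q ∈ hs, 0 ≤ q.1) ∧ b + csum hs ≤ p.2 ∧
      ∀ x, maxL (p :: l) x = repF a b hs x := by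
  intro l
  induction l with
  | nil =>
    intro p _ _
    exact ⟨p.1, p.2, [], by simp, by simp [csum], fun x => by
      simp [maxL_single, lineF, repF, hsum_nil]⟩
  | cons q l ih =>
    intro p hle hsorted
    have hsort' : l.Pairwise (fun q r => r.2 ≤ q.2) := (List.pairwise_cons.1 hsorted).2
    have hle' : ∀ r ∈ l, r.2 ≤ q.2 := (List.pairwise_cons.1 hsorted).1
    have hqp : q.2 ≤ p.2 := hle q (by simp)
    obtain ⟨a, b, hs, hnn, hinv, hrep⟩ := ih q hle' hsort'
    -- h := maxL (q :: l) = repF a b hs, with b + csum hs ≤ q.2 ≤ p.2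
    set h : ℝ → ℝ := repF a b hs with hh
    have hinvp : b + csum hs ≤ p.2 := le_trans hinv hqp
    -- g := lineF p - h is monotone
    have hmono : ∀ {x y : ℝ}, x ≤ y → lineF p x - h x ≤ lineF p y - h y := by
      intro x y hxy
      have h1 := hsum_sub_le hnn hxy
      have : h y - h x ≤ (b + csum hs) * (y - x) := by
        simp only [hh, repF]; nlinarith
      have h2 : (b + csum hs) * (y - x) ≤ p.2 * (y - x) :=
        mul_le_mul_of_nonneg_right hinvp (by linarith)
      simp only [lineF]; nlinarith
    by_cases hA : ∀ x, lineF p x ≤ h x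
    · refine ⟨a, b, hs, hnn, hinvp, fun x => ?_⟩
      rw [maxL_cons, hrep x, max_eq_right (hA x)]
    push_neg at hA
    obtain ⟨x₀, hx₀⟩ := hA
    by_cases hB : ∀ x, h x ≤ lineF p x
    · refine ⟨p.1, p.2, [], by simp, by simp [csum], fun x => ?_⟩
      rw [maxL_cons, hrep x, max_eq_left (hB x), lineF, repF, hsum_nil, add_zero]
    push_neg at hB
    obtain ⟨x₁, hx₁⟩ := hB
    -- crossing point via IVT
    have hx10 : x₁ < x₀ := by
      by_contra hcon
      push_neg at hcon
      have := hmono hcon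
      linarith
    have hgc : ContinuousOn (fun x => lineF p x - h x) (Set.Icc x₁ x₀) :=
      (((continuous_const.add (continuous_const.mul continuous_id)).sub
        (continuous_repF a b hs))).continuousOn
    have h0mem : (0:ℝ) ∈ Set.Icc (lineF p x₁ - h x₁) (lineF p x₀ - h x₀) :=
      ⟨by linarith, by linarith⟩
    obtain ⟨t, htmem, ht⟩ := intermediate_value_Icc (le_of_lt hx10) hgc h0mem
    have ht' : lineF p t - h t = 0 := ht
    have ht0 : lineF p t = h t := by linarith
    have hbelow : ∀ x ≤ t, lineF p x ≤ h x := fun x hx => by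
      have := hmono hx; rw [ht0] at this; linarith
    have habove : ∀ x, t ≤ x → h x ≤ lineF p x := fun x hx => by
      have := hmono hx; rw [ht0] at this; linarith
    set hs₁ : List (ℝ × ℝ) := hs.filter (fun q => q.2 ≤ t) with hhs₁
    set C : ℝ := p.2 - (b + csum hs₁) with hC
    have hnn₁ : ∀ q ∈ hs₁, 0 ≤ q.1 := fun q hq => hnn q (List.mem_of_mem_filter hq)
    have hCnn : 0 ≤ C := by
      have := csum_filter_le hnn (fun q => q.2 ≤ t)
      rw [hC]; rw [hhs₁]; linarith
    refine ⟨a, b, (C, t) :: hs₁, ?_, ?_, ?_⟩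
    · intro r hr
      rcases List.mem_cons.1 hr with h' | h'
      · subst h'; exact hCnn
      · exact hnn₁ r h'
    · rw [csum_cons]; simp only [hC]; ring_nf; rfl
    · intro x
      have hrepx : maxL (p :: q :: l) x = max (lineF p x) (h x) := by
        rw [maxL_cons, hrep x]
      rcases le_total x t with hx | hx
      · -- below t : equals h x, and new rep agrees with old
        rw [hrepx, max_eq_right (hbelow x hx)]
        have hz : hingeF t x = 0 := by
          unfold hingeF; rw [max_eq_right]; linarith
        rw [repF, hsum_cons, hz, mul_zero, zero_add, hhs₁, hsum_filter hx]
        rfl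
      · -- above t : equals the line p
        rw [hrepx, max_eq_left (habove x hx)]
        have hall : ∀ r ∈ (C, t) :: hs₁, r.2 ≤ t := by
          intro r hr
          rcases List.mem_cons.1 hr with h' | h'
          · subst h'; exact le_rfl
          · rw [hhs₁] at h'
            simpa using List.of_mem_filter h'
        have e1 : repF a b ((C, t) :: hs₁) x
            = repF a b ((C, t) :: hs₁) t + (b + csum ((C, t) :: hs₁)) * (x - t) := by
          rw [repF, repF, hsum_above hall hx]; ring
        have e2 : repF a b ((C, t) :: hs₁) t = h t := by
          have hz : hingeF t t = 0 := by unfold hingeF; simp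
          rw [repF, hsum_cons, hz, mul_zero, zero_add, hhs₁, hsum_filter (le_refl t)]
          rfl
        have e3 : b + csum ((C, t) :: hs₁) = p.2 := by
          rw [csum_cons]; simp only [hC]; ring
        rw [e1, e2, e3, ← ht0]
        simp only [lineF]; ring




/-- a subgradient of `φ` at `t`: supremum of slopes from the left -/
noncomputable def sg (φ : ℝ → ℝ) (t : ℝ) : ℝ :=
  sSup ((fun y => (φ t - φ y) / (t - y)) '' Set.Iio t)

lemma sg_subgrad (hφ : ConvexOn ℝ Set.univ φ) (t x : ℝ) :
    φ t + sg φ t * (x - t) ≤ φ x := by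
  set S := (fun y => (φ t - φ y) / (t - y)) '' Set.Iio t with hS
  have hne : S.Nonempty := ⟨_, ⟨t - 1, by simp, rfl⟩⟩
  have hbdd : BddAbove S := by
    refine ⟨(φ (t + 1) - φ t) / (t + 1 - t), ?_⟩
    rintro z ⟨y, hy, rfl⟩
    simp only [Set.mem_Iio] at hy
    exact hφ.slope_mono_adjacent (Set.mem_univ y) (Set.mem_univ (t+1)) hy (by linarith)
  rcases lt_trichotomy x t with h | h | h
  · have hmem : (φ t - φ x) / (t - x) ∈ S := ⟨x, h, rfl⟩
    have hle : (φ t - φ x) / (t - x) ≤ sg φ t := le_csSup hbdd hmem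
    have htx : 0 < t - x := by linarith
    rw [div_le_iff₀ htx] at hle
    nlinarith
  · subst h; simp
  · have hle : sg φ t ≤ (φ x - φ t) / (x - t) := by
      apply csSup_le hne
      rintro z ⟨y, hy, rfl⟩
      simp only [Set.mem_Iio] at hy
      exact hφ.slope_mono_adjacent (Set.mem_univ y) (Set.mem_univ x) hy h
    have htx : 0 < x - t := by linarith
    rw [le_div_iff₀ htx] at hle
    nlinarith

lemma sg_bound (hφ : ConvexOn ℝ Set.univ φ) {x y M : ℝ}
    (hM : ∀ z ∈ Set.Icc (x - 2) (x + 2), |φ z| ≤ M) (hy : |y - x| ≤ 1) :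
    |sg φ y| ≤ 2 * M := by
  rw [abs_le] at hy
  have hyI : y ∈ Set.Icc (x - 2) (x + 2) := ⟨by linarith, by linarith⟩
  have hMy := hM y hyI
  have hMp := hM (x + 2) ⟨by linarith, le_rfl⟩
  have hMm := hM (x - 2) ⟨le_rfl, by linarith⟩
  have h1 := sg_subgrad hφ y (x + 2)
  have h2 := sg_subgrad hφ y (x - 2)
  rw [abs_le] at hMy hMp hMm
  -- sg φ y * (x + 2 - y) ≤ 2M,  x + 2 - y ≥ 1
  -- sg φ y * (x - 2 - y) ≤ 2M,  x - 2 - y ≤ -1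
  rw [abs_le]
  constructor
  · nlinarith [abs_nonneg (sg φ y), neg_abs_le (sg φ y), le_abs_self (sg φ y)]
  · nlinarith [abs_nonneg (sg φ y), neg_abs_le (sg φ y), le_abs_self (sg φ y)]

lemma support_line_approx (hφ : ConvexOn ℝ Set.univ φ) (hcont : Continuous φ)
    (x : ℝ) {ε : ℝ} (hε : 0 < ε) :
    ∃ q : ℚ, φ x - ε < φ (q : ℝ) + sg φ (q : ℝ) * (x - (q : ℝ)) := by
  obtain ⟨M, hM⟩ := (isCompact_Icc (a := x - 2) (b := x + 2)).exists_bound_of_continuousOn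
    hcont.continuousOn
  simp only [Real.norm_eq_abs] at hM
  have hM0 : 0 ≤ M := le_trans (abs_nonneg _) (hM x ⟨by linarith, by linarith⟩)
  obtain ⟨δ', hδ'pos, hδ'⟩ := Metric.continuousAt_iff.1 (hcont.continuousAt (x := x))
    (ε / 2) (by linarith)
  set δ : ℝ := min δ' (min 1 (ε / (2 * (2 * M + 1)))) with hδdef
  have hδpos : 0 < δ := by
    apply lt_min hδ'pos
    apply lt_min one_pos
    positivity
  obtain ⟨q, hq1, hq2⟩ := exists_rat_btwn (show x - δ < x by linarith)
  refine ⟨q, ?_⟩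
  have hqx : |(q:ℝ) - x| ≤ 1 := by
    rw [abs_le]
    constructor
    · have : δ ≤ 1 := le_trans (min_le_right _ _) (min_le_left _ _)
      linarith
    · linarith
  have hsgb := sg_bound hφ hM hqx
  have hφq : |φ (q:ℝ) - φ x| < ε / 2 := by
    have : dist (q:ℝ) x < δ' := by
      rw [Real.dist_eq, abs_lt]
      have : δ ≤ δ' := min_le_left _ _
      constructor <;> linarith
    simpa [Real.dist_eq] using hδ' this
  have hxq : |x - (q:ℝ)| ≤ ε / (2 * (2 * M + 1)) := by
    rw [abs_le]
    have : δ ≤ ε / (2 * (2 * M + 1)) := le_trans (min_le_right _ _) (min_le_right _ _)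
    constructor <;> linarith
  have key : |sg φ (q:ℝ) * (x - (q:ℝ))| ≤ ε / 2 := by
    rw [abs_mul]
    have h1 : |sg φ (q:ℝ)| * |x - (q:ℝ)| ≤ (2*M) * (ε / (2 * (2 * M + 1))) :=
      mul_le_mul hsgb hxq (abs_nonneg _) (by linarith)
    have h2 : (2*M) * (ε / (2 * (2 * M + 1))) ≤ ε / 2 := by
      have e : 2 * M * (ε / (2 * (2 * M + 1))) = ε * (2 * M) / (2 * (2 * M + 1)) := by ring
      rw [e, div_le_div_iff₀ (by positivity) (by norm_num : (0:ℝ) < 2)]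
      nlinarith
    linarith
  rw [abs_le] at key
  rw [abs_lt] at hφq
  linarith









lemma max_zero_eq (a : ℝ) : max a 0 = (a + |a|) / 2 := by
  rcases le_total a 0 with h | h
  · rw [max_eq_right h, abs_of_nonpos h]; ring
  · rw [max_eq_left h, abs_of_nonneg h]; ring

variable {μ : Measure ℝ} [IsFiniteMeasure μ]

lemma integrable_lineF (hμ : Integrable (fun x : ℝ => x) μ) (p : ℝ × ℝ) :
    Integrable (lineF p) μ := by
  have : lineF p = fun x => p.1 + p.2 * x := rfl
  rw [this]
  exact (integrable_const p.1).add (hμ.const_mul p.2)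

lemma integrable_abs_sub (hμ : Integrable (fun x : ℝ => x) μ) (t : ℝ) :
    Integrable (fun x => |x - t|) μ := (hμ.sub (integrable_const t)).abs

lemma integrable_hingeF (hμ : Integrable (fun x : ℝ => x) μ) (t : ℝ) :
    Integrable (hingeF t) μ := by
  have : hingeF t = fun x => ((x - t) + |x - t|) / 2 := by
    funext x; rw [hingeF, max_zero_eq]
  rw [this]
  exact ((hμ.sub (integrable_const t)).add (integrable_abs_sub hμ t)).div_const 2

lemma integrable_hsum (hμ : Integrable (fun x : ℝ => x) μ) (hs : List (ℝ × ℝ)) :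
    Integrable (hsum hs) μ := by
  induction hs with
  | nil =>
    have : hsum [] = fun _ : ℝ => (0:ℝ) := rfl
    rw [this]; exact integrable_const 0
  | cons q hs ih =>
    have : hsum (q :: hs) = fun x => q.1 * hingeF q.2 x + hsum hs x := rfl
    rw [this]
    exact ((integrable_hingeF hμ q.2).const_mul q.1).add ih

lemma integrable_repF (hμ : Integrable (fun x : ℝ => x) μ) (a b : ℝ) (hs : List (ℝ × ℝ)) :
    Integrable (repF a b hs) μ := by
  have : repF a b hs = fun x => (a + b * x) + hsum hs x := rfl
  rw [this]
  exact ((integrable_const a).add (hμ.const_mul b)).add (integrable_hsum hμ hs)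

section Compare

variable {ν : Measure ℝ} [IsFiniteMeasure ν]
variable (hμ : Integrable (fun x : ℝ => x) μ) (hν : Integrable (fun x : ℝ => x) ν)
variable (hmass : μ Set.univ = ν Set.univ) (hbar : ∫ x, x ∂μ = ∫ x, x ∂ν)

include hμ hν hmass hbar

lemma integral_sub_lin (t : ℝ) : ∫ x, (x - t) ∂μ = ∫ x, (x - t) ∂ν := by
  rw [integral_sub hμ (integrable_const t), integral_sub hν (integrable_const t),
    integral_const, integral_const, hbar, measureReal_def, measureReal_def, hmass]

lemma integral_hingeF_le (hpot : ∀ t : ℝ, ∫ x, |x - t| ∂μ ≤ ∫ x, |x - t| ∂ν) (t : ℝ) :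
    ∫ x, hingeF t x ∂μ ≤ ∫ x, hingeF t x ∂ν := by
  have he : ∀ (θ : Measure ℝ), ∫ x, hingeF t x ∂θ = ∫ x, ((x - t) + |x - t|) / 2 ∂θ := by
    intro θ
    apply integral_congr_ae (ae_of_all _ fun x => ?_)
    rw [hingeF, max_zero_eq]
  have hintμ : Integrable (fun x : ℝ => x - t) μ := hμ.sub (integrable_const t)
  have hintν : Integrable (fun x : ℝ => x - t) ν := hν.sub (integrable_const t)
  rw [he μ, he ν]
  rw [integral_div, integral_div,
    integral_add hintμ (integrable_abs_sub hμ t),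
    integral_add hintν (integrable_abs_sub hν t)]
  have h1 := integral_sub_lin hμ hν hmass hbar t
  have h2 := hpot t
  rw [integral_sub hμ (integrable_const t), integral_sub hν (integrable_const t)] at h1
  rw [integral_sub hμ (integrable_const t), integral_sub hν (integrable_const t)]
  linarith

lemma integral_hsum_le (hpot : ∀ t : ℝ, ∫ x, |x - t| ∂μ ≤ ∫ x, |x - t| ∂ν)
    {hs : List (ℝ × ℝ)} (hnn : ∀ q ∈ hs, 0 ≤ q.1) :
    ∫ x, hsum hs x ∂μ ≤ ∫ x, hsum hs x ∂ν := by
  induction hs with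
  | nil => simp [hsum]
  | cons q hs ih =>
    have hq : 0 ≤ q.1 := hnn q (by simp)
    have e : ∀ (θ : Measure ℝ), [IsFiniteMeasure θ] → Integrable (fun x : ℝ => x) θ →
        ∫ x, hsum (q :: hs) x ∂θ = q.1 * ∫ x, hingeF q.2 x ∂θ + ∫ x, hsum hs x ∂θ := by
      intro θ _ hθ
      have : (fun x => hsum (q :: hs) x) = fun x => q.1 * hingeF q.2 x + hsum hs x := rfl
      rw [this, integral_add ((integrable_hingeF hθ q.2).const_mul q.1) (integrable_hsum hθ hs),
        integral_const_mul]
    rw [e μ hμ, e ν hν]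
    have := ih (fun r hr => hnn r (by simp [hr]))
    have h2 := integral_hingeF_le hμ hν hmass hbar hpot q.2
    nlinarith

lemma integral_repF_le (hpot : ∀ t : ℝ, ∫ x, |x - t| ∂μ ≤ ∫ x, |x - t| ∂ν)
    {hs : List (ℝ × ℝ)} (hnn : ∀ q ∈ hs, 0 ≤ q.1) (a b : ℝ) :
    ∫ x, repF a b hs x ∂μ ≤ ∫ x, repF a b hs x ∂ν := by
  have e : ∀ (θ : Measure ℝ), [IsFiniteMeasure θ] → Integrable (fun x : ℝ => x) θ →
      ∫ x, repF a b hs x ∂θ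
        = (a * (θ Set.univ).toReal + b * ∫ x, x ∂θ) + ∫ x, hsum hs x ∂θ := by
    intro θ _ hθ
    have : (fun x => repF a b hs x) = fun x => (a + b * x) + hsum hs x := rfl
    have i1 : Integrable (fun x : ℝ => a + b * x) θ := (integrable_const a).add (hθ.const_mul b)
    rw [this, integral_add i1 (integrable_hsum hθ hs),
      integral_add (integrable_const a) (hθ.const_mul b), integral_const, measureReal_def, integral_const_mul,
      smul_eq_mul, mul_comm]
  rw [e μ hμ, e ν hν, hmass, hbar]
  exact add_le_add le_rfl (integral_hsum_le hμ hν hmass hbar hpot hnn)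

end Compare


/-- Any max of finitely many lines is affine plus a nonnegative hinge combination. -/
lemma maxL_rep (L : List (ℝ × ℝ)) (hL : L ≠ []) :
    ∃ a b hs, (∀ q ∈ hs, 0 ≤ q.1) ∧ ∀ x, maxL L x = repF a b hs x := by
  classical
  set r : ℝ × ℝ → ℝ × ℝ → Prop := fun p q => q.2 ≤ p.2 with hr
  letI : DecidableRel r := fun p q => inferInstanceAs (Decidable (q.2 ≤ p.2))
  letI : Std.Total r := ⟨fun p q => le_total q.2 p.2⟩
  letI : IsTrans (ℝ × ℝ) r := ⟨fun p q u h1 h2 => le_trans h2 h1⟩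
  have hperm := List.perm_insertionSort r L
  have hsorted := List.pairwise_insertionSort r L
  set L' := L.insertionSort r with hL'
  have hne' : L' ≠ [] := by
    intro h
    rw [h] at hperm
    exact hL (List.Perm.nil_eq hperm).symm
  obtain ⟨p, l', hpl⟩ := List.exists_cons_of_ne_nil hne'
  rw [hpl] at hsorted hperm
  obtain ⟨hhead, htail⟩ := List.pairwise_cons.1 hsorted
  obtain ⟨a, b, hs, hnn, _, hrep⟩ := rep_exists l' p hhead htail
  refine ⟨a, b, hs, hnn, fun x => ?_⟩
  rw [← hrep x]
  exact maxL_eq_of_mem_iff hL (by simp) (fun q => (hperm.mem_iff (a := q)).symm) x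

end CvxOrdAux

open CvxOrdAux

def ConvexOrder (μ ν : Measure ℝ) : Prop :=
  ∀ φ : ℝ → ℝ, ConvexOn ℝ Set.univ φ → Integrable φ μ → Integrable φ ν →
    ∫ x, φ x ∂μ ≤ ∫ x, φ x ∂ν

/-- The potential function `u_θ(t) = ∫ |x − t| dθ(x)`. -/
noncomputable def potentialFn (θ : Measure ℝ) (t : ℝ) : ℝ := ∫ x, |x - t| ∂θ

set_option maxHeartbeats 1000000 in
/-- For finite measures with finite first moments, equal mass and equal barycenter,
the convex order is equivalent to the pointwise comparison of potential functions. -/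
theorem convexOrder_iff_potential_le (μ ν : Measure ℝ)
    [IsFiniteMeasure μ] [IsFiniteMeasure ν]
    (hμ : Integrable (fun x : ℝ => x) μ) (hν : Integrable (fun x : ℝ => x) ν)
    (hmass : μ Set.univ = ν Set.univ)
    (hbar : ∫ x, x ∂μ = ∫ x, x ∂ν) :
    ConvexOrder μ ν ↔ ∀ t : ℝ, potentialFn μ t ≤ potentialFn ν t := by
  constructor
  · intro CO t
    have hconv : ConvexOn ℝ Set.univ (fun x => |x - t|) := by
      refine ⟨convex_univ, fun x _ y _ a b ha hb hab => ?_⟩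
      simp only [smul_eq_mul]
      have e : a * x + b * y - t = a * (x - t) + b * (y - t) := by
        have h1 : a + b = 1 := hab
        linear_combination t * h1
      rw [e]
      calc |a * (x - t) + b * (y - t)| ≤ |a * (x - t)| + |b * (y - t)| := abs_add_le _ _
        _ = a * |x - t| + b * |y - t| := by
            rw [abs_mul, abs_mul, abs_of_nonneg ha, abs_of_nonneg hb]
    exact CO _ hconv (integrable_abs_sub hμ t) (integrable_abs_sub hν t)
  · intro hpot φ hφ hφμ hφν
    classical
    have hpot' : ∀ t : ℝ, ∫ x, |x - t| ∂μ ≤ ∫ x, |x - t| ∂ν := hpot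
    have hcont : Continuous φ := hφ.locallyLipschitz.continuous
    set en : ℕ → ℝ := fun n => (((Denumerable.eqv ℚ).symm n : ℚ) : ℝ) with hen
    set ld : ℕ → ℝ × ℝ := fun n => (φ (en n) - sg φ (en n) * (en n), sg φ (en n)) with hld
    have hline : ∀ k x, lineF (ld k) x = φ (en k) + sg φ (en k) * (x - en k) := by
      intro k x; simp only [lineF, hld]; ring
    set lines : ℕ → List (ℝ × ℝ) := fun n => (List.range (n+1)).map ld with hlines
    have hne : ∀ n, lines n ≠ [] := by simp [hlines]
    set f : ℕ → ℝ → ℝ := fun n x => maxL (lines n) x with hf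
    have hmemld : ∀ k n, k ≤ n → ld k ∈ lines n := fun k n hk =>
      List.mem_map_of_mem (f := ld) (List.mem_range.2 (by omega))
    have hub : ∀ n x, f n x ≤ φ x := by
      intro n x
      apply maxL_le (hne n)
      intro q hq
      obtain ⟨k, _, rfl⟩ := List.mem_map.1 hq
      rw [hline]
      have := sg_subgrad hφ (en k) x
      linarith
    have hlb : ∀ n x, lineF (ld 0) x ≤ f n x := fun n x => le_maxL (hmemld 0 n (by omega)) x
    have hmono : ∀ k n, k ≤ n → ∀ x, f k x ≤ f n x := by
      intro k n hk x
      apply maxL_le_maxL (hne k) _ x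
      intro q hq
      obtain ⟨j, hj, rfl⟩ := List.mem_map.1 hq
      refine List.mem_map_of_mem (f := ld) (List.mem_range.2 ?_)
      rw [List.mem_range] at hj
      omega
    have hconvpt : ∀ x, Filter.Tendsto (fun n => f n x) Filter.atTop (nhds (φ x)) := by
      intro x
      rw [Metric.tendsto_atTop]
      intro ε hε
      obtain ⟨q, hq⟩ := support_line_approx hφ hcont x hε
      refine ⟨Denumerable.eqv ℚ q, fun n hn => ?_⟩
      have hk : en (Denumerable.eqv ℚ q) = (q : ℝ) := by
        show (((Denumerable.eqv ℚ).symm (Denumerable.eqv ℚ q) : ℚ) : ℝ) = (q : ℝ)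
        rw [Equiv.symm_apply_apply]
      have h1 : φ x - ε < lineF (ld (Denumerable.eqv ℚ q)) x := by
        rw [hline, hk]; exact hq
      have h2 : lineF (ld (Denumerable.eqv ℚ q)) x ≤ f n x := le_maxL (hmemld _ n hn) x
      have h3 := hub n x
      rw [Real.dist_eq, abs_lt]
      constructor <;> linarith
    have hrepn : ∀ n, ∃ a b hs, (∀ q ∈ hs, 0 ≤ q.1) ∧ ∀ x, f n x = repF a b hs x :=
      fun n => maxL_rep (lines n) (hne n)
    have hIle : ∀ n, ∫ x, f n x ∂μ ≤ ∫ x, f n x ∂ν := by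
      intro n
      obtain ⟨a, b, hs, hnn, hfr⟩ := hrepn n
      have e1 : ∫ x, f n x ∂μ = ∫ x, repF a b hs x ∂μ :=
        integral_congr_ae (ae_of_all _ fun x => hfr x)
      have e2 : ∫ x, f n x ∂ν = ∫ x, repF a b hs x ∂ν :=
        integral_congr_ae (ae_of_all _ fun x => hfr x)
      rw [e1, e2]
      exact integral_repF_le hμ hν hmass hbar hpot' hnn a b
    have hfc : ∀ n, Continuous (f n) := by
      intro n
      obtain ⟨a, b, hs, _, hfr⟩ := hrepn n
      have : f n = repF a b hs := funext hfr
      rw [this]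
      exact continuous_repF a b hs
    set bound : ℝ → ℝ := fun x => |φ x| + |lineF (ld 0) x| with hbound
    have hbb : ∀ n x, ‖f n x‖ ≤ bound x := by
      intro n x
      rw [Real.norm_eq_abs, abs_le]
      have h1 := hub n x
      have h2 := hlb n x
      have h3 := le_abs_self (φ x)
      have h4 := neg_abs_le (lineF (ld 0) x)
      have h5 := abs_nonneg (φ x)
      have h6 := abs_nonneg (lineF (ld 0) x)
      constructor <;> simp only [hbound] <;> linarith
    have htμ : Filter.Tendsto (fun n => ∫ x, f n x ∂μ) Filter.atTop (nhds (∫ x, φ x ∂μ)) :=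
      tendsto_integral_of_dominated_convergence bound
        (fun n => (hfc n).aestronglyMeasurable)
        (hφμ.abs.add (integrable_lineF hμ (ld 0)).abs)
        (fun n => ae_of_all _ fun x => hbb n x)
        (ae_of_all _ fun x => hconvpt x)
    have htν : Filter.Tendsto (fun n => ∫ x, f n x ∂ν) Filter.atTop (nhds (∫ x, φ x ∂ν)) :=
      tendsto_integral_of_dominated_convergence bound
        (fun n => (hfc n).aestronglyMeasurable)
        (hφν.abs.add (integrable_lineF hν (ld 0)).abs)
        (fun n => ae_of_all _ fun x => hbb n x)
        (ae_of_all _ fun x => hconvpt x)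
    exact le_of_tendsto_of_tendsto' htμ htν hIle
end

section
/- Let T ⊆ ℝ be a closed set and let P_T be the Kellerer dilation onto T. Then P_T is a 1-Lipschitz kernel on [inf T, sup T]: for all x, x' ∈ [inf T, sup T], the Wasserstein-1 distance satisfies W(P_T(x,·), P_T(x',·)) ≤ |x − x'|. -/
open MeasureTheory
open scoped Classical

/-- The support of a measure on a topological space. -/
def msupport {α : Type*} [TopologicalSpace α] [MeasurableSpace α] (μ : Measure α) : Set α :=
  {x | ∀ U : Set α, IsOpen U → x ∈ U → 0 < μ U}

/-- The Kellerer dilation onto a closed set `T`: the point mass at `x` if `x ∈ T`, and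
otherwise the two-point martingale measure on the nearest points of `T` below and above `x`. -/

noncomputable def kellererDilation (T : Set ℝ) (x : ℝ) : Measure ℝ :=
  if x ∈ T then Measure.dirac x
  else
    ENNReal.ofReal ((sInf (T ∩ Set.Ici x) - x) / (sInf (T ∩ Set.Ici x) - sSup (T ∩ Set.Iic x))) •
        Measure.dirac (sSup (T ∩ Set.Iic x)) +
      ENNReal.ofReal ((x - sSup (T ∩ Set.Iic x)) / (sInf (T ∩ Set.Ici x) - sSup (T ∩ Set.Iic x))) •
        Measure.dirac (sInf (T ∩ Set.Ici x))

lemma integrable_dirac' (f : ℝ → ℝ) (hf : Continuous f) (a : ℝ) :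
    Integrable f (Measure.dirac a) := by
  refine ⟨hf.aestronglyMeasurable, ?_⟩
  rw [HasFiniteIntegral, lintegral_dirac]
  exact ENNReal.coe_lt_top

lemma sSup_mem_of_closed (T : Set ℝ) (hT : IsClosed T) (x : ℝ) (h : ∃ a ∈ T, a ≤ x) :
    sSup (T ∩ Set.Iic x) ∈ T ∧ sSup (T ∩ Set.Iic x) ≤ x := by
  obtain ⟨a, haT, hax⟩ := h
  have hne : (T ∩ Set.Iic x).Nonempty := ⟨a, haT, hax⟩
  have hbdd : BddAbove (T ∩ Set.Iic x) := ⟨x, fun t ht => ht.2⟩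
  have hmem := (hT.inter isClosed_Iic).csSup_mem hne hbdd
  exact ⟨hmem.1, hmem.2⟩

lemma sInf_mem_of_closed (T : Set ℝ) (hT : IsClosed T) (x : ℝ) (h : ∃ b ∈ T, x ≤ b) :
    sInf (T ∩ Set.Ici x) ∈ T ∧ x ≤ sInf (T ∩ Set.Ici x) := by
  obtain ⟨b, hbT, hxb⟩ := h
  have hne : (T ∩ Set.Ici x).Nonempty := ⟨b, hbT, hxb⟩
  have hbdd : BddBelow (T ∩ Set.Ici x) := ⟨x, fun t ht => ht.2⟩
  have hmem := (hT.inter isClosed_Ici).csInf_mem hne hbdd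
  exact ⟨hmem.1, hmem.2⟩

lemma integral_kellerer_notMem (T : Set ℝ) (f : ℝ → ℝ) (hf : Continuous f)
    (x : ℝ) (hxT : x ∉ T)
    (ha : sSup (T ∩ Set.Iic x) < x) (hb : x < sInf (T ∩ Set.Ici x)) :
    ∫ y, f y ∂(kellererDilation T x) =
      ((sInf (T ∩ Set.Ici x) - x) / (sInf (T ∩ Set.Ici x) - sSup (T ∩ Set.Iic x))) *
        f (sSup (T ∩ Set.Iic x)) +
      ((x - sSup (T ∩ Set.Iic x)) / (sInf (T ∩ Set.Ici x) - sSup (T ∩ Set.Iic x))) *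
        f (sInf (T ∩ Set.Ici x)) := by
  set a := sSup (T ∩ Set.Iic x)
  set b := sInf (T ∩ Set.Ici x)
  have hab : (0:ℝ) < b - a := by linarith
  have hc1 : (0:ℝ) ≤ (b - x) / (b - a) := div_nonneg (by linarith) (by linarith)
  have hc2 : (0:ℝ) ≤ (x - a) / (b - a) := div_nonneg (by linarith) (by linarith)
  rw [kellererDilation, if_neg hxT]
  rw [integral_add_measure
      (((integrable_dirac' f hf a).smul_measure ENNReal.ofReal_ne_top))
      (((integrable_dirac' f hf b).smul_measure ENNReal.ofReal_ne_top))]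
  rw [integral_smul_measure, integral_smul_measure, integral_dirac, integral_dirac,
    ENNReal.toReal_ofReal hc1, ENNReal.toReal_ofReal hc2]
  simp [smul_eq_mul]

lemma integral_kellerer_mem (T : Set ℝ) (f : ℝ → ℝ) (x : ℝ) (hxT : x ∈ T) :
    ∫ y, f y ∂(kellererDilation T x) = f x := by
  rw [kellererDilation, if_pos hxT, integral_dirac]

lemma interp_bound (f : ℝ → ℝ) (hf : LipschitzWith 1 f) (a b x t : ℝ)
    (hax : a < x) (hxb : x < b) (ht : t ≤ a ∨ b ≤ t) :
    |((b - x) / (b - a) * f a + (x - a) / (b - a) * f b) - f t| ≤ |x - t| := by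
  have hab : (0:ℝ) < b - a := by linarith
  have h1 : |f a - f t| ≤ |a - t| := by
    have := hf.dist_le_mul a t
    simpa [Real.dist_eq] using this
  have h2 : |f b - f t| ≤ |b - t| := by
    have := hf.dist_le_mul b t
    simpa [Real.dist_eq] using this
  have key : ((b - x) / (b - a) * f a + (x - a) / (b - a) * f b) - f t =
      ((b - x) * (f a - f t) + (x - a) * (f b - f t)) / (b - a) := by
    field_simp
    ring
  rw [key, abs_div, abs_of_pos hab, div_le_iff₀ hab]
  rcases ht with ht | ht
  · have hat : |a - t| = a - t := abs_of_nonneg (by linarith)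
    have hbt : |b - t| = b - t := abs_of_nonneg (by linarith)
    have hxt : |x - t| = x - t := abs_of_nonneg (by linarith)
    rw [hat] at h1; rw [hbt] at h2; rw [hxt]
    obtain ⟨h1l, h1r⟩ := abs_le.mp h1
    obtain ⟨h2l, h2r⟩ := abs_le.mp h2
    rw [abs_le]
    constructor
    · nlinarith
    · nlinarith
  · have hat : |a - t| = t - a := by rw [abs_sub_comm]; exact abs_of_nonneg (by linarith)
    have hbt : |b - t| = t - b := by rw [abs_sub_comm]; exact abs_of_nonneg (by linarith)
    have hxt : |x - t| = t - x := by rw [abs_sub_comm]; exact abs_of_nonneg (by linarith)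
    rw [hat] at h1; rw [hbt] at h2; rw [hxt]
    obtain ⟨h1l, h1r⟩ := abs_le.mp h1
    obtain ⟨h2l, h2r⟩ := abs_le.mp h2
    rw [abs_le]
    constructor
    · nlinarith
    · nlinarith

lemma kellerer_point_bound (T : Set ℝ) (hT : IsClosed T) (f : ℝ → ℝ)
    (hf : LipschitzWith 1 f) (x t : ℝ)
    (hx1 : ∃ a ∈ T, a ≤ x) (hx2 : ∃ b ∈ T, x ≤ b) (hxT : x ∉ T)
    (ht : t ≤ sSup (T ∩ Set.Iic x) ∨ sInf (T ∩ Set.Ici x) ≤ t) :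
    |∫ y, f y ∂(kellererDilation T x) - f t| ≤ |x - t| := by
  obtain ⟨haT, hax⟩ := sSup_mem_of_closed T hT x hx1
  obtain ⟨hbT, hxb⟩ := sInf_mem_of_closed T hT x hx2
  have hax' : sSup (T ∩ Set.Iic x) < x := lt_of_le_of_ne hax (fun h => hxT (h ▸ haT))
  have hxb' : x < sInf (T ∩ Set.Ici x) := lt_of_le_of_ne hxb (fun h => hxT (h ▸ hbT))
  rw [integral_kellerer_notMem T f hf.continuous x hxT hax' hxb']
  exact interp_bound f hf _ _ x t hax' hxb' ht

/-- The Kellerer dilation is a 1-Lipschitz kernel on `[inf T, sup T]` for the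
Wasserstein-1 distance (in its dual Kantorovich–Rubinstein formulation). -/
theorem kellererDilation_lipschitz (T : Set ℝ) (hT : IsClosed T)
    (x x' : ℝ)
    (hx : (∃ a ∈ T, a ≤ x) ∧ ∃ b ∈ T, x ≤ b)
    (hx' : (∃ a ∈ T, a ≤ x') ∧ ∃ b ∈ T, x' ≤ b) :
    ∀ f : ℝ → ℝ, LipschitzWith 1 f →
      |∫ y, f y ∂(kellererDilation T x) - ∫ y, f y ∂(kellererDilation T x')| ≤ |x - x'| := by
  intro f hf
  wlog hxx : x ≤ x' generalizing x x'
  · rw [abs_sub_comm, abs_sub_comm x]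
    exact this x' x hx' hx (le_of_not_ge hxx)
  by_cases hxT : x ∈ T <;> by_cases hx'T : x' ∈ T
  · rw [integral_kellerer_mem T f x hxT, integral_kellerer_mem T f x' hx'T]
    have := hf.dist_le_mul x x'
    simpa [Real.dist_eq] using this
  · -- x ∈ T, x' ∉ T : use t = x
    rw [integral_kellerer_mem T f x hxT]
    have hxle : x ≤ sSup (T ∩ Set.Iic x') :=
      le_csSup ⟨x', fun t ht => ht.2⟩ ⟨hxT, hxx⟩
    have := kellerer_point_bound T hT f hf x' x hx'.1 hx'.2 hx'T (Or.inl hxle)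
    calc |f x - ∫ y, f y ∂(kellererDilation T x')|
        = |∫ y, f y ∂(kellererDilation T x') - f x| := abs_sub_comm _ _
      _ ≤ |x' - x| := this
      _ = |x - x'| := abs_sub_comm _ _
  · -- x ∉ T, x' ∈ T : use t = x'
    rw [integral_kellerer_mem T f x' hx'T]
    have hble : sInf (T ∩ Set.Ici x) ≤ x' :=
      csInf_le ⟨x, fun t ht => ht.2⟩ ⟨hx'T, hxx⟩
    exact kellerer_point_bound T hT f hf x x' hx.1 hx.2 hxT (Or.inr hble)
  · -- both outside T
    obtain ⟨haT, hax⟩ := sSup_mem_of_closed T hT x hx.1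
    obtain ⟨hbT, hxb⟩ := sInf_mem_of_closed T hT x hx.2
    obtain ⟨ha'T, ha'x⟩ := sSup_mem_of_closed T hT x' hx'.1
    obtain ⟨hb'T, hx'b⟩ := sInf_mem_of_closed T hT x' hx'.2
    set a := sSup (T ∩ Set.Iic x) with ha_def
    set b := sInf (T ∩ Set.Ici x) with hb_def
    set a' := sSup (T ∩ Set.Iic x') with ha'_def
    set b' := sInf (T ∩ Set.Ici x') with hb'_def
    have hax' : a < x := lt_of_le_of_ne hax (fun h => hxT (h ▸ haT))
    have hxb' : x < b := lt_of_le_of_ne hxb (fun h => hxT (h ▸ hbT))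
    have ha'x' : a' < x' := lt_of_le_of_ne ha'x (fun h => hx'T (h ▸ ha'T))
    have hx'b' : x' < b' := lt_of_le_of_ne hx'b (fun h => hx'T (h ▸ hb'T))
    by_cases hsplit : b ≤ x'
    · -- different gaps: use t = b as intermediate point
      have h1 := kellerer_point_bound T hT f hf x b hx.1 hx.2 hxT (Or.inr le_rfl)
      have hba' : b ≤ a' := le_csSup ⟨x', fun t ht => ht.2⟩ ⟨hbT, hsplit⟩
      have h2 := kellerer_point_bound T hT f hf x' b hx'.1 hx'.2 hx'T (Or.inl hba')
      have hxb1 : |x - b| = b - x := by rw [abs_sub_comm]; exact abs_of_nonneg (by linarith)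
      have hxb2 : |x' - b| = x' - b := abs_of_nonneg (by linarith)
      rw [hxb1] at h1; rw [hxb2] at h2
      have hxx1 : |x - x'| = x' - x := by rw [abs_sub_comm]; exact abs_of_nonneg (by linarith)
      rw [hxx1]
      calc |∫ y, f y ∂(kellererDilation T x) - ∫ y, f y ∂(kellererDilation T x')|
          ≤ |∫ y, f y ∂(kellererDilation T x) - f b| +
            |f b - ∫ y, f y ∂(kellererDilation T x')| := abs_sub_le _ _ _
        _ ≤ (b - x) + (x' - b) := by
            refine add_le_add h1 ?_
            rw [abs_sub_comm]; exact h2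
        _ = x' - x := by ring
    · -- same gap
      push_neg at hsplit
      have hIic : T ∩ Set.Iic x = T ∩ Set.Iic x' := by
        ext t
        constructor
        · rintro ⟨htT, htx⟩; exact ⟨htT, le_trans htx hxx⟩
        · rintro ⟨htT, htx'⟩
          refine ⟨htT, Set.mem_Iic.mpr ?_⟩
          by_contra hlt
          push_neg at hlt
          have hbt : b ≤ t := csInf_le ⟨x, fun s hs => hs.2⟩ ⟨htT, le_of_lt hlt⟩
          have := Set.mem_Iic.mp htx'
          linarith
      have hIci : T ∩ Set.Ici x = T ∩ Set.Ici x' := by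
        ext t
        constructor
        · rintro ⟨htT, htx⟩
          have hbt : b ≤ t := csInf_le ⟨x, fun s hs => hs.2⟩ ⟨htT, htx⟩
          exact ⟨htT, Set.mem_Ici.mpr (by linarith)⟩
        · rintro ⟨htT, htx'⟩
          exact ⟨htT, Set.mem_Ici.mpr (le_trans hxx (Set.mem_Ici.mp htx'))⟩
      have haa : a = a' := by rw [ha_def, ha'_def, hIic]
      have hbb : b = b' := by rw [hb_def, hb'_def, hIci]
      rw [integral_kellerer_notMem T f hf.continuous x hxT hax' hxb',
        integral_kellerer_notMem T f hf.continuous x' hx'T ha'x' hx'b']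
      rw [← ha_def, ← hb_def, ← ha'_def, ← hb'_def, ← haa, ← hbb]
      have hab : (0:ℝ) < b - a := by linarith
      have hfab : |f b - f a| ≤ b - a := by
        have h := hf.dist_le_mul b a
        simp only [Real.dist_eq, NNReal.coe_one, ENNReal.coe_one, one_mul] at h
        calc |f b - f a| ≤ |b - a| := by simpa using h
          _ = b - a := abs_of_pos hab
      have key : ((b - x) / (b - a) * f a + (x - a) / (b - a) * f b) -
          ((b - x') / (b - a) * f a + (x' - a) / (b - a) * f b) =
          (x - x') * ((f b - f a) / (b - a)) := by
        field_simp
        ring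
      rw [key, abs_mul]
      have : |(f b - f a) / (b - a)| ≤ 1 := by
        rw [abs_div, abs_of_pos hab, div_le_one hab]
        exact hfab
      calc |x - x'| * |(f b - f a) / (b - a)| ≤ |x - x'| * 1 :=
            mul_le_mul_of_nonneg_left this (abs_nonneg _)
        _ = |x - x'| := mul_one _
end

section
/- Let δ = α·δ_x be an atom of mass α at x and suppose δ ≤_{c,+} ν for a finite measure ν on ℝ with finite first moment. Then the shadow S^ν(δ) equals the restriction of ν between two quantiles: S^ν(δ) = (G_ν)_#(λ restricted to (s, s+α)) where G_ν is the quantile function of ν, and s is chosen so that this measure has barycenter x. -/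
open MeasureTheory

/-- `μ ≤_{c,+} ν`: there exists `η` with `μ ≤_c η` and `η ≤ ν` setwise. -/
def ConvexPlusOrder (μ ν : Measure ℝ) : Prop :=
  ∃ η : Measure ℝ, ConvexOrder μ η ∧ η ≤ ν

/-- `η` is the shadow of `μ` in `ν`: the `≤_c`-smallest measure `η` with `μ ≤_c η`
and `η ≤ ν`. -/
def IsShadow (μ ν η : Measure ℝ) : Prop :=
  ConvexOrder μ η ∧ η ≤ ν ∧
    ∀ η' : Measure ℝ, ConvexOrder μ η' → η' ≤ ν → ConvexOrder η η'

open Set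

lemma affine_convexOn (p q : ℝ) : ConvexOn ℝ Set.univ (fun y => p * y + q) := by
  refine ⟨convex_univ, ?_⟩
  intro a _ b _ u v hu hv huv
  simp only [smul_eq_mul]
  have hv' : v = 1 - u := by linarith
  subst hv'
  exact le_of_eq (by ring)

lemma exists_support_line {φ : ℝ → ℝ} (hφ : ConvexOn ℝ Set.univ φ) (z : ℝ) :
    ∃ p : ℝ, ∀ y : ℝ, φ z + p * (y - z) ≤ φ y := by
  set S : Set ℝ := (fun y => (φ z - φ y) / (z - y)) '' Iio z with hS
  have hne : S.Nonempty := ⟨_, ⟨z - 1, by simp, rfl⟩⟩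
  have hub : ∀ w ∈ S, w ≤ (φ (z + 1) - φ z) / (z + 1 - z) := by
    rintro w ⟨y, hy, rfl⟩
    exact hφ.slope_mono_adjacent (mem_univ _) (mem_univ _) hy (by linarith)
  have hbdd : BddAbove S := ⟨_, hub⟩
  refine ⟨sSup S, fun y => ?_⟩
  rcases lt_trichotomy y z with hyz | rfl | hzy
  · have h1 : (φ z - φ y) / (z - y) ≤ sSup S := le_csSup hbdd ⟨y, hyz, rfl⟩
    have hzy' : (0:ℝ) < z - y := by linarith
    have h2 : φ z - φ y ≤ sSup S * (z - y) := (div_le_iff₀ hzy').1 h1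
    have h3 : sSup S * (y - z) = -(sSup S * (z - y)) := by ring
    linarith
  · simp
  · have h2 : sSup S ≤ (φ y - φ z) / (y - z) := by
      apply csSup_le hne
      rintro w ⟨u, hu, rfl⟩
      exact hφ.slope_mono_adjacent (mem_univ _) (mem_univ _) hu hzy
    have hpos : (0:ℝ) < y - z := by linarith
    have h3 : sSup S * (y - z) ≤ φ y - φ z := by
      have := (le_div_iff₀ hpos).1 h2
      linarith
    linarith

lemma chord {φ : ℝ → ℝ} (hφ : ConvexOn ℝ Set.univ φ) {a b : ℝ} (hab : a < b) :
    ∃ p q : ℝ, p * a + q = φ a ∧ p * b + q = φ b ∧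
      (∀ y ∈ Set.Icc a b, φ y ≤ p * y + q) ∧ (∀ y, y ∉ Set.Ioo a b → p * y + q ≤ φ y) := by
  have hba : b - a ≠ 0 := sub_ne_zero.2 hab.ne'
  refine ⟨(φ b - φ a) / (b - a), φ a - (φ b - φ a) / (b - a) * a, by ring, ?_, ?_, ?_⟩
  · have : (φ b - φ a) / (b - a) * (b - a) = φ b - φ a := div_mul_cancel₀ _ hba
    linarith [this]
  · rintro y ⟨hay, hyb⟩
    rcases eq_or_lt_of_le hay with rfl | hay'
    · exact le_of_eq (by ring)
    rcases eq_or_lt_of_le hyb with rfl | hyb'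
    · have : (φ y - φ a) / (y - a) * (y - a) = φ y - φ a := div_mul_cancel₀ _ hba
      linarith [this]
    · have h := hφ.secant_mono (mem_univ a) (mem_univ y) (mem_univ b)
        (ne_of_gt hay') hab.ne' hyb
      have hpos : (0:ℝ) < y - a := by linarith
      have h2 : φ y - φ a ≤ (φ b - φ a) / (b - a) * (y - a) := (div_le_iff₀ hpos).1 h
      nlinarith [h2]
  · intro y hy
    rcases lt_trichotomy y a with hya | rfl | hay
    · have h := hφ.secant_mono (mem_univ a) (mem_univ y) (mem_univ b)
        hya.ne hab.ne' (by linarith)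
      have hneg : y - a < 0 := by linarith
      have h2 : (φ b - φ a) / (b - a) * (y - a) ≤ φ y - φ a := by
        have := (div_le_iff_of_neg hneg).1 h
        linarith
      nlinarith [h2]
    · exact le_of_eq (by ring)
    · have hyb : b ≤ y := by
        by_contra hc
        exact hy ⟨hay, lt_of_not_ge hc⟩
      rcases eq_or_lt_of_le hyb with rfl | hyb'
      · have : (φ b - φ a) / (b - a) * (b - a) = φ b - φ a := div_mul_cancel₀ _ hba
        linarith [this]
      · have h := hφ.secant_mono (mem_univ b) (mem_univ a) (mem_univ y)
          hab.ne (ne_of_gt hyb') (by linarith)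
        have heq : (φ a - φ b) / (a - b) = (φ b - φ a) / (b - a) := by
          rw [show φ a - φ b = -(φ b - φ a) by ring, show a - b = -(b - a) by ring,
            neg_div_neg_eq]
        rw [heq] at h
        have hpos : (0:ℝ) < y - b := by linarith
        have h2 : (φ b - φ a) / (b - a) * (y - b) ≤ φ y - φ b := by
          have := (le_div_iff₀ hpos).1 h
          linarith
        have h3 : (φ b - φ a) / (b - a) * (b - a) = φ b - φ a := div_mul_cancel₀ _ hba
        nlinarith [h2, h3]

lemma lemA {κ η' : Measure ℝ} [IsFiniteMeasure κ] [IsFiniteMeasure η']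
    {U : Set ℝ} (hU : MeasurableSet U) {g : ℝ → ℝ} (hg : Continuous g)
    (hle : η'.restrict U ≤ κ.restrict U)
    (hnull : κ (Uᶜ ∩ {y | g y ≠ 0}) = 0)
    (hgU : ∀ y ∈ U, g y ≤ 0) (hgUc : ∀ y ∈ Uᶜ, 0 ≤ g y)
    (hgκ : Integrable g κ) (hgη : Integrable g η') :
    ∫ y, g y ∂κ ≤ ∫ y, g y ∂η' := by
  have hsplitκ : ∫ y, g y ∂κ = (∫ y in U, g y ∂κ) + ∫ y in Uᶜ, g y ∂κ :=
    (integral_add_compl hU hgκ).symm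
  have hsplitη : ∫ y, g y ∂η' = (∫ y in U, g y ∂η') + ∫ y in Uᶜ, g y ∂η' :=
    (integral_add_compl hU hgη).symm
  have hκc : ∫ y in Uᶜ, g y ∂κ = 0 := by
    apply integral_eq_zero_of_ae
    rw [Filter.EventuallyEq, ae_iff]
    rw [Measure.restrict_apply' hU.compl]
    convert hnull using 2
    rw [Set.inter_comm]
    rfl
  have hmid : ∫ y in U, g y ∂κ ≤ ∫ y in U, g y ∂η' := by
    have hneg : (fun _ : ℝ => (0:ℝ)) ≤ᵐ[κ.restrict U] fun y => -g y := by
      rw [Filter.EventuallyLE, ae_restrict_iff' hU]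
      exact Filter.Eventually.of_forall fun y hy => neg_nonneg.2 (hgU y hy)
    have h := integral_mono_measure hle hneg (hgκ.neg.restrict)
    rw [integral_neg, integral_neg] at h
    linarith
  have hηc : 0 ≤ ∫ y in Uᶜ, g y ∂η' := setIntegral_nonneg hU.compl hgUc
  linarith

lemma integrable_smul_dirac {α x : ℝ} {f : ℝ → ℝ} (hf : Measurable f) :
    Integrable f (ENNReal.ofReal α • Measure.dirac x) := by
  refine Integrable.smul_measure ?_ ENNReal.ofReal_ne_top
  refine ⟨hf.aestronglyMeasurable, ?_⟩
  rw [HasFiniteIntegral]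
  rw [lintegral_dirac]
  exact ENNReal.coe_lt_top

lemma integral_smul_dirac (α x : ℝ) (hα : 0 ≤ α) (f : ℝ → ℝ) :
    ∫ y, f y ∂(ENNReal.ofReal α • Measure.dirac x) = α * f x := by
  rw [integral_smul_measure, integral_dirac, ENNReal.toReal_ofReal hα, smul_eq_mul]

lemma integral_affine {α : ℝ} {μ : Measure ℝ} [IsFiniteMeasure μ]
    (hμ : μ Set.univ = ENNReal.ofReal α) (hα : 0 ≤ α)
    (hid : Integrable (fun y : ℝ => y) μ) (p q : ℝ) :
    ∫ y, (p * y + q) ∂μ = p * (∫ y, y ∂μ) + q * α := by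
  rw [integral_add (hid.const_mul p) (integrable_const q), integral_const, integral_const_mul,
    measureReal_def, hμ, ENNReal.toReal_ofReal hα, smul_eq_mul]
  ring

lemma competitor_props {ν η' : Measure ℝ} [IsFiniteMeasure ν] [IsFiniteMeasure η']
    (hν : Integrable (fun y : ℝ => y) ν) {α x : ℝ} (hα : 0 < α)
    (hco : ConvexOrder (ENNReal.ofReal α • Measure.dirac x) η')
    (hle : η' ≤ ν) :
    η' Set.univ = ENNReal.ofReal α ∧ (∫ y, y ∂η') = α * x ∧
      Integrable (fun y : ℝ => y) η' := by
  have hint : Integrable (fun y : ℝ => y) η' := hν.mono_measure hle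
  have hmass : (η' Set.univ).toReal = α := by
    have h1 := hco (fun _ => 1) (convexOn_const 1 convex_univ)
      (integrable_smul_dirac measurable_const) (integrable_const 1)
    have h2 := hco (fun _ => (-1:ℝ)) (convexOn_const (-1) convex_univ)
      (integrable_smul_dirac measurable_const) (integrable_const (-1))
    rw [integral_smul_dirac _ _ hα.le, integral_const, measureReal_def, smul_eq_mul] at h1 h2
    linarith
  have hmass' : η' Set.univ = ENNReal.ofReal α := by
    rw [← hmass, ENNReal.ofReal_toReal (measure_ne_top η' _)]
  have hbary : (∫ y, y ∂η') = α * x := by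
    have h1 := hco (fun y => y) (convexOn_id convex_univ)
      (integrable_smul_dirac measurable_id) hint
    have h2 := hco (fun y => -y) (by simpa using affine_convexOn (-1) 0)
      (integrable_smul_dirac measurable_id.neg) hint.neg
    rw [integral_smul_dirac _ _ hα.le] at h1 h2
    rw [integral_neg] at h2
    linarith
  exact ⟨hmass', hbary, hint⟩

lemma band_mass {G : ℝ → ℝ} (hG : Monotone G) {α : ℝ} (hα : 0 ≤ α) (s : ℝ) :
    ((volume.restrict (Set.Ioo s (s + α))).map G) Set.univ = ENNReal.ofReal α := by
  rw [Measure.map_apply hG.measurable MeasurableSet.univ, Set.preimage_univ,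
    Measure.restrict_apply_univ, Real.volume_Ioo]
  congr 1
  ring

lemma band_le {ν : Measure ℝ} [IsFiniteMeasure ν] {G : ℝ → ℝ} (hG : Monotone G)
    (hGν : (volume.restrict (Set.Ioo 0 (ν Set.univ).toReal)).map G = ν)
    {α s : ℝ} (hs : 0 ≤ s) (hsm : s + α ≤ (ν Set.univ).toReal) :
    (volume.restrict (Set.Ioo s (s + α))).map G ≤ ν := by
  rw [Measure.le_iff]
  intro A hA
  rw [Measure.map_apply hG.measurable hA, Measure.restrict_apply (hG.measurable hA)]
  conv_rhs => rw [← hGν]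
  rw [Measure.map_apply hG.measurable hA, Measure.restrict_apply (hG.measurable hA)]
  exact measure_mono (Set.inter_subset_inter_right _ (Set.Ioo_subset_Ioo hs hsm))

lemma band_restrict_le {ν : Measure ℝ} [IsFiniteMeasure ν] {G : ℝ → ℝ} (hG : Monotone G)
    (hGν : (volume.restrict (Set.Ioo 0 (ν Set.univ).toReal)).map G = ν)
    {α s : ℝ} {U : Set ℝ} (hU : MeasurableSet U)
    (hUin : ∀ t, 0 < t → t < (ν Set.univ).toReal → G t ∈ U → s < t ∧ t < s + α)
    {η' : Measure ℝ} (hη' : η' ≤ ν) :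
    η'.restrict U ≤ ((volume.restrict (Set.Ioo s (s + α))).map G).restrict U := by
  rw [Measure.le_iff]
  intro A hA
  rw [Measure.restrict_apply hA, Measure.restrict_apply hA]
  have h1 : η' (A ∩ U) ≤ ν (A ∩ U) := by
    exact Measure.le_iff'.1 hη' _
  refine h1.trans ?_
  conv_lhs => rw [← hGν]
  rw [Measure.map_apply hG.measurable (hA.inter hU),
    Measure.restrict_apply (hG.measurable (hA.inter hU)),
    Measure.map_apply hG.measurable (hA.inter hU),
    Measure.restrict_apply (hG.measurable (hA.inter hU))]
  apply measure_mono
  rintro t ⟨htA, ht0, htm⟩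
  exact ⟨htA, hUin t ht0 htm htA.2⟩

lemma band_null {G : ℝ → ℝ} (hG : Monotone G) {α s : ℝ} {V : Set ℝ}
    (hV : MeasurableSet V) (hVout : ∀ t, s < t → t < s + α → G t ∉ V) :
    ((volume.restrict (Set.Ioo s (s + α))).map G) V = 0 := by
  rw [Measure.map_apply hG.measurable hV, Measure.restrict_apply (hG.measurable hV)]
  have : G ⁻¹' V ∩ Set.Ioo s (s + α) = ∅ := by
    rw [Set.eq_empty_iff_forall_notMem]
    rintro t ⟨htV, ht1, ht2⟩
    exact hVout t ht1 ht2 htV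
  rw [this, measure_empty]

lemma band_integral {G : ℝ → ℝ} (hG : Monotone G) {α s : ℝ} {f : ℝ → ℝ}
    (hf : Continuous f) :
    ∫ y, f y ∂((volume.restrict (Set.Ioo s (s + α))).map G)
      = ∫ t in Set.Ioo s (s + α), f (G t) := by
  rw [integral_map hG.measurable.aemeasurable hf.aestronglyMeasurable]

lemma band_integrable_id {G : ℝ → ℝ} (hG : Monotone G) {α s : ℝ} (hα : 0 ≤ α) :
    Integrable (fun y : ℝ => y) ((volume.restrict (Set.Ioo s (s + α))).map G) := by
  rw [show (fun y : ℝ => y) = id from rfl,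
    integrable_map_measure continuous_id.aestronglyMeasurable hG.measurable.aemeasurable]
  have h1 : IntervalIntegrable G volume s (s + α) := hG.intervalIntegrable
  have h2 : IntegrableOn G (Set.Ioc s (s + α)) volume := by
    have := h1.1
    simpa using this
  exact (h2.mono_set Set.Ioo_subset_Ioc_self)

lemma band_finite {G : ℝ → ℝ} (hG : Monotone G) {α s : ℝ} (hα : 0 ≤ α) :
    IsFiniteMeasure ((volume.restrict (Set.Ioo s (s + α))).map G) :=
  ⟨by rw [band_mass hG hα]; exact ENNReal.ofReal_lt_top⟩

/-- Shadow of an atom: if `δ = α·δ_x ≤_{c,+} ν`, then `S^ν(δ)` is the restriction of `ν`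
between two quantiles, i.e. the image under the quantile function `G_ν` of Lebesgue measure
on an interval `(s, s + α)`, where `s` is chosen so that the barycenter is `x`. -/
theorem shadow_of_atom (ν : Measure ℝ) [IsFiniteMeasure ν]
    (hν : Integrable (fun x : ℝ => x) ν)
    (α x : ℝ) (hα : 0 < α)
    (h : ConvexPlusOrder (ENNReal.ofReal α • Measure.dirac x) ν)
    (G : ℝ → ℝ) (hG : Monotone G)
    (hGl : ∀ t : ℝ, ContinuousWithinAt G (Set.Iio t) t)
    (hGν : (volume.restrict (Set.Ioo 0 (ν Set.univ).toReal)).map G = ν) :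
    ∃ s : ℝ, 0 ≤ s ∧ s + α ≤ (ν Set.univ).toReal ∧
      IsShadow (ENNReal.ofReal α • Measure.dirac x) ν
        ((volume.restrict (Set.Ioo s (s + α))).map G) ∧
      ∫ y, y ∂((volume.restrict (Set.Ioo s (s + α))).map G) = α * x := by
  classical
  set m := (ν Set.univ).toReal with hm
  obtain ⟨η₀, hco₀, hle₀⟩ := h
  haveI : IsFiniteMeasure η₀ := isFiniteMeasure_of_le ν hle₀
  obtain ⟨hmass₀, hbary₀, hint₀⟩ := competitor_props hν hα hco₀ hle₀
  have hαm : α ≤ m := by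
    have h1 : η₀ Set.univ ≤ ν Set.univ := Measure.le_iff'.1 hle₀ _
    have h2 := ENNReal.toReal_mono (measure_ne_top ν _) h1
    rw [hmass₀, ENNReal.toReal_ofReal hα.le] at h2
    exact h2
  -- the barycenter function
  set F : ℝ → ℝ := fun s => ∫ t in Set.Ioo s (s + α), G t with hF
  have hii : ∀ a b : ℝ, IntervalIntegrable G volume a b := fun a b => hG.intervalIntegrable
  have hFeq : ∀ s : ℝ, F s = (∫ t in (0:ℝ)..(s + α), G t) - ∫ t in (0:ℝ)..s, G t := by
    intro s
    rw [intervalIntegral.integral_interval_sub_left (hii 0 (s + α)) (hii 0 s),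
      intervalIntegral.integral_of_le (by linarith : s ≤ s + α),
      integral_Ioc_eq_integral_Ioo]
  have hFc : Continuous F := by
    have h1 : Continuous fun u : ℝ => ∫ t in (0:ℝ)..u, G t :=
      intervalIntegral.continuous_primitive hii 0
    have h2 : Continuous fun s : ℝ =>
        (∫ t in (0:ℝ)..(s + α), G t) - ∫ t in (0:ℝ)..s, G t :=
      (h1.comp (continuous_id.add continuous_const)).sub h1
    have h3 : F = fun s : ℝ => (∫ t in (0:ℝ)..(s + α), G t) - ∫ t in (0:ℝ)..s, G t :=
      funext hFeq
    rw [h3]; exact h2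
  -- band integral identities
  have hbandid : ∀ s : ℝ,
      (∫ y, y ∂((volume.restrict (Set.Ioo s (s + α))).map G)) = F s := fun s =>
    band_integral hG continuous_id
  -- lower bound
  have hlow : F 0 ≤ α * x := by
    set κ := (volume.restrict (Set.Ioo 0 (0 + α))).map G with hκ
    haveI : IsFiniteMeasure κ := band_finite hG hα.le
    set b0 := G (0 + α) with hb0
    have hgc : Continuous fun y : ℝ => y - b0 := continuous_id.sub continuous_const
    have hVm : MeasurableSet ((Set.Iio b0)ᶜ ∩ {y : ℝ | y - b0 ≠ 0}) := by
      refine measurableSet_Iio.compl.inter ?_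
      exact ((hgc.measurable (measurableSet_singleton 0)).compl)
    have hA := lemA (κ := κ) (η' := η₀) measurableSet_Iio hgc
      (band_restrict_le hG hGν measurableSet_Iio
        (fun t ht0 htm htb => by
          constructor
          · exact ht0
          · by_contra hc
            have : b0 ≤ G t := hG (by linarith)
            rw [Set.mem_Iio] at htb
            linarith) hle₀)
      (band_null hG hVm (fun t ht1 ht2 hV => by
        have hGt : G t ≤ b0 := hG (by linarith)
        rcases eq_or_lt_of_le hGt with heq | hlt
        · exact hV.2 (by rw [heq]; ring)
        · exact hV.1 (Set.mem_Iio.2 hlt)))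
      (fun y hy => by rw [Set.mem_Iio] at hy; linarith)
      (fun y hy => by rw [Set.mem_compl_iff, Set.mem_Iio, not_lt] at hy; linarith)
      ((band_integrable_id hG hα.le).sub (integrable_const b0))
      (hint₀.sub (integrable_const b0))
    have e1 : ∫ y, (y - b0) ∂κ = (∫ y, y ∂κ) - b0 * α := by
      rw [integral_sub (band_integrable_id hG hα.le) (integrable_const b0), integral_const, measureReal_def,
        band_mass hG hα.le, ENNReal.toReal_ofReal hα.le, smul_eq_mul, mul_comm]
    have e2 : ∫ y, (y - b0) ∂η₀ = α * x - b0 * α := by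
      rw [integral_sub hint₀ (integrable_const b0), integral_const, measureReal_def, hmass₀,
        ENNReal.toReal_ofReal hα.le, smul_eq_mul, hbary₀]
      ring
    have e3 : (∫ y, y ∂κ) = F 0 := hbandid 0
    rw [e1, e2, e3] at hA
    linarith
  -- upper bound
  have hupp : α * x ≤ F (m - α) := by
    set κ := (volume.restrict (Set.Ioo (m - α) (m - α + α))).map G with hκ
    haveI : IsFiniteMeasure κ := band_finite hG hα.le
    set a1 := sInf (G '' Set.Ioi (m - α)) with ha1
    have hne1 : (G '' Set.Ioi (m - α)).Nonempty :=
      ⟨G (m - α + 1), ⟨m - α + 1, Set.mem_Ioi.2 (by linarith), rfl⟩⟩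
    have hbdd1 : BddBelow (G '' Set.Ioi (m - α)) :=
      ⟨G (m - α), by rintro _ ⟨t, ht, rfl⟩; exact hG (le_of_lt ht)⟩
    have ha1_le : ∀ t, m - α < t → a1 ≤ G t := fun t ht => csInf_le hbdd1 ⟨t, ht, rfl⟩
    have hle_a1 : ∀ t, t ≤ m - α → G t ≤ a1 := by
      intro t ht
      refine le_csInf hne1 ?_
      rintro _ ⟨u, hu, rfl⟩
      exact hG (le_of_lt (lt_of_le_of_lt ht hu))
    have hgc : Continuous fun y : ℝ => a1 - y := continuous_const.sub continuous_id
    have hVm : MeasurableSet ((Set.Ioi a1)ᶜ ∩ {y : ℝ | a1 - y ≠ 0}) := by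
      refine measurableSet_Ioi.compl.inter ?_
      exact ((hgc.measurable (measurableSet_singleton 0)).compl)
    have hA := lemA (κ := κ) (η' := η₀) measurableSet_Ioi hgc
      (band_restrict_le hG hGν measurableSet_Ioi
        (fun t ht0 htm hta => by
          rw [Set.mem_Ioi] at hta
          constructor
          · by_contra hc
            have : G t ≤ a1 := hle_a1 t (by linarith)
            linarith
          · linarith) hle₀)
      (band_null hG hVm (fun t ht1 ht2 hV => by
        have hGt : a1 ≤ G t := ha1_le t (by linarith)
        rcases eq_or_lt_of_le hGt with heq | hlt
        · exact hV.2 (by rw [← heq]; ring)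
        · exact hV.1 (Set.mem_Ioi.2 hlt)))
      (fun y hy => by rw [Set.mem_Ioi] at hy; linarith)
      (fun y hy => by rw [Set.mem_compl_iff, Set.mem_Ioi, not_lt] at hy; linarith)
      ((integrable_const a1).sub (band_integrable_id hG hα.le))
      ((integrable_const a1).sub hint₀)
    have e1 : ∫ y, (a1 - y) ∂κ = a1 * α - (∫ y, y ∂κ) := by
      rw [integral_sub (integrable_const a1) (band_integrable_id hG hα.le), integral_const, measureReal_def,
        band_mass hG hα.le, ENNReal.toReal_ofReal hα.le, smul_eq_mul, mul_comm]
    have e2 : ∫ y, (a1 - y) ∂η₀ = a1 * α - α * x := by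
      rw [integral_sub (integrable_const a1) hint₀, integral_const, measureReal_def, hmass₀,
        ENNReal.toReal_ofReal hα.le, smul_eq_mul, hbary₀]
      ring
    have e3 : (∫ y, y ∂κ) = F (m - α) := hbandid (m - α)
    rw [e1, e2, e3] at hA
    linarith
  -- intermediate value theorem
  obtain ⟨s, hsmem, hFs⟩ :=
    intermediate_value_Icc (by linarith : (0:ℝ) ≤ m - α) hFc.continuousOn ⟨hlow, hupp⟩
  have hs0 : 0 ≤ s := hsmem.1
  have hsm : s + α ≤ m := by have := hsmem.2; linarith
  set κ := (volume.restrict (Set.Ioo s (s + α))).map G with hκ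
  haveI : IsFiniteMeasure κ := band_finite hG hα.le
  have hbary : (∫ y, y ∂κ) = α * x := by rw [hbandid s, hFs]
  have hκν : κ ≤ ν := band_le hG hGν hs0 hsm
  refine ⟨s, hs0, hsm, ⟨?_, hκν, ?_⟩, hbary⟩
  · -- ConvexOrder δ κ
    intro φ hφ hφδ hφκ
    rw [integral_smul_dirac α x hα.le φ]
    obtain ⟨p, hp⟩ := exists_support_line hφ x
    have hintaff : Integrable (fun y : ℝ => p * y + (φ x - p * x)) κ :=
      ((band_integrable_id hG hα.le).const_mul p).add (integrable_const _)
    have key : ∫ y, (p * y + (φ x - p * x)) ∂κ ≤ ∫ y, φ y ∂κ := by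
      refine integral_mono hintaff hφκ ?_
      intro y
      have h1 := hp y
      have h2 : p * (y - x) = p * y - p * x := by ring
      simp only
      linarith
    have e1 : ∫ y, (p * y + (φ x - p * x)) ∂κ = α * φ x := by
      rw [integral_affine (band_mass hG hα.le s) hα.le (band_integrable_id hG hα.le), hbary]
      ring
    linarith
  · -- minimality
    intro η' hco' hle'
    haveI : IsFiniteMeasure η' := isFiniteMeasure_of_le ν hle'
    obtain ⟨hmass', hbary', hint'⟩ := competitor_props hν hα hco' hle'
    intro φ hφ hφκ hφη'
    have hφcont : Continuous φ := continuousOn_univ.1 (hφ.continuousOn isOpen_univ)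
    set a := sInf (G '' Set.Ioi s) with ha
    set b := G (s + α) with hb
    have hne : (G '' Set.Ioi s).Nonempty := ⟨G (s + 1), ⟨s + 1, Set.mem_Ioi.2 (by linarith), rfl⟩⟩
    have hbdd : BddBelow (G '' Set.Ioi s) :=
      ⟨G s, by rintro _ ⟨t, ht, rfl⟩; exact hG (le_of_lt ht)⟩
    have ha_lb : ∀ t, s < t → a ≤ G t := fun t ht => csInf_le hbdd ⟨t, ht, rfl⟩
    have hle_a : ∀ t, t ≤ s → G t ≤ a := by
      intro t ht
      refine le_csInf hne ?_
      rintro _ ⟨u, hu, rfl⟩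
      exact hG (le_of_lt (lt_of_le_of_lt ht hu))
    have hab : a ≤ b := csInf_le hbdd ⟨s + α, Set.mem_Ioi.2 (by linarith), rfl⟩
    obtain ⟨p, q, hin, hout, htouch⟩ :
        ∃ p q : ℝ, (∀ y ∈ Set.Ioo a b, φ y ≤ p * y + q) ∧
          (∀ y, y ∉ Set.Ioo a b → p * y + q ≤ φ y) ∧
          (∀ t, s < t → t < s + α → G t ∈ Set.Ioo a b ∨ φ (G t) = p * G t + q) := by
      rcases eq_or_lt_of_le hab with heq | hab'
      · -- a = b : point mass, support line
        have hGt : ∀ t, s < t → t < s + α → G t = a := by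
          intro t ht1 ht2
          refine le_antisymm ?_ (ha_lb t ht1)
          rw [heq]
          exact hG (by linarith)
        have hax : a = x := by
          have e1 : (∫ y, y ∂κ) = ∫ t in Set.Ioo s (s + α), G t := hbandid s
          have e2 : (∫ t in Set.Ioo s (s + α), G t) = ∫ t in Set.Ioo s (s + α), a := by
            refine setIntegral_congr_fun measurableSet_Ioo ?_
            intro t ht
            exact hGt t ht.1 ht.2
          have e3 : (∫ t in Set.Ioo s (s + α), (a : ℝ)) = α * a := by
            rw [setIntegral_const, measureReal_def, Real.volume_Ioo, show s + α - s = α by ring,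
              ENNReal.toReal_ofReal hα.le, smul_eq_mul]
          have hthis := hbary
          rw [e1, e2, e3] at hthis
          have : α * a = α * x := by linarith
          exact mul_left_cancel₀ (ne_of_gt hα) this
        obtain ⟨p, hp⟩ := exists_support_line hφ x
        refine ⟨p, φ x - p * x, ?_, ?_, ?_⟩
        · intro y hy
          rw [← heq] at hy
          exact absurd (hy.1.trans hy.2) (lt_irrefl a)
        · intro y _
          have h1 := hp y
          have h2 : p * (y - x) = p * y - p * x := by ring
          linarith
        · intro t ht1 ht2
          right
          rw [hGt t ht1 ht2, hax]
          ring
      · obtain ⟨p, q, hpa, hpb, hinside, houtside⟩ := chord hφ hab'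
        refine ⟨p, q, fun y hy => hinside y (Set.Ioo_subset_Icc_self hy), houtside, ?_⟩
        intro t ht1 ht2
        have h1 : a ≤ G t := ha_lb t ht1
        have h2 : G t ≤ b := hG (by linarith)
        rcases eq_or_lt_of_le h1 with heq1 | hlt1
        · right; rw [← heq1, ← hpa]  -- φ a = p a + q
        · rcases eq_or_lt_of_le h2 with heq2 | hlt2
          · right; rw [heq2, ← hpb]
          · exact Or.inl ⟨hlt1, hlt2⟩
    set g : ℝ → ℝ := fun y => φ y - (p * y + q) with hg
    have hgc : Continuous g :=
      hφcont.sub ((continuous_const.mul continuous_id).add continuous_const)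
    have hVm : MeasurableSet ((Set.Ioo a b)ᶜ ∩ {y : ℝ | g y ≠ 0}) :=
      measurableSet_Ioo.compl.inter ((hgc.measurable (measurableSet_singleton 0)).compl)
    have hintaffκ : Integrable (fun y : ℝ => p * y + q) κ :=
      ((band_integrable_id hG hα.le).const_mul p).add (integrable_const q)
    have hintaffη : Integrable (fun y : ℝ => p * y + q) η' :=
      (hint'.const_mul p).add (integrable_const q)
    have hA := lemA (κ := κ) (η' := η') measurableSet_Ioo hgc
      (band_restrict_le hG hGν measurableSet_Ioo
        (fun t ht0 htm htab => by
          constructor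
          · by_contra hc
            have : G t ≤ a := hle_a t (by linarith)
            exact absurd htab.1 (by linarith)
          · by_contra hc
            have : b ≤ G t := hG (by linarith)
            exact absurd htab.2 (by linarith)) hle')
      (band_null hG hVm (fun t ht1 ht2 hV => by
        rcases htouch t ht1 ht2 with hmem | heq
        · exact hV.1 hmem
        · refine hV.2 ?_
          show φ (G t) - (p * G t + q) = 0
          rw [heq]; ring))
      (fun y hy => by
        have := hin y hy
        show φ y - (p * y + q) ≤ 0
        linarith)
      (fun y hy => by
        have := hout y hy
        show 0 ≤ φ y - (p * y + q)
        linarith)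
      (hφκ.sub hintaffκ) (hφη'.sub hintaffη)
    have e1 : ∫ y, g y ∂κ = (∫ y, φ y ∂κ) - (p * (α * x) + q * α) := by
      rw [hg]
      rw [integral_sub hφκ hintaffκ,
        integral_affine (band_mass hG hα.le s) hα.le (band_integrable_id hG hα.le), hbary]
    have e2 : ∫ y, g y ∂η' = (∫ y, φ y ∂η') - (p * (α * x) + q * α) := by
      rw [hg]
      rw [integral_sub hφη' hintaffη, integral_affine hmass' hα.le hint', hbary']
    rw [e1, e2] at hA
    linarith
end

section
/- Suppose π̂ ∈ Π(μ̂, ν) is the lifted shadow coupling, i.e. for every u ∈ [0,1] the second marginal of π̂ restricted to [0,u] × ℝ × ℝ equals S^ν(μ_{[0,u]}). Then for every p ∈ [0,1] and q ∈ ℝ, π̂ minimizes γ̂ ↦ ∫ 1_{u ≤ p}|y − q| dγ̂(u, x, y) over all lifted martingale couplings γ̂ ∈ Π(μ̂, ν) with ∫y dγ̂_{u,x} = x μ̂-a.e. -/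
open MeasureTheory

/-- `π̂` is a lifted martingale coupling of the lift `μ̂ ∈ Π(λ, μ)` and `ν`:
its `(u,x)`-marginal is `μ̂`, its `y`-marginal is `ν`, and `∫ y dπ̂_{u,x}(y) = x` for
`μ̂`-a.e. `(u,x)`, expressed via `∫ (y - x) f(u,x) dπ̂ = 0` for all bounded measurable `f`. -/
def IsLiftedMartingaleCoupling (πh : Measure (ℝ × ℝ × ℝ)) (μh : Measure (ℝ × ℝ))
    (ν : Measure ℝ) : Prop :=
  πh.map (fun p => (p.1, p.2.1)) = μh ∧ πh.map (fun p => p.2.2) = ν ∧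
    ∀ f : ℝ × ℝ → ℝ, Measurable f → (∀ q, |f q| ≤ 1) →
      ∫ p, (p.2.2 - p.2.1) * f (p.1, p.2.1) ∂πh = 0

/-- The primitive curve `μ_{[0,u]}(A) = μ̂([0,u] × A)` of a lift `μ̂`. -/
noncomputable def liftCurve (μh : Measure (ℝ × ℝ)) (u : ℝ) : Measure ℝ :=
  (μh.restrict {a : ℝ × ℝ | a.1 ≤ u}).map Prod.snd

/-- The `y`-marginal of `π̂` restricted to `[0,u] × ℝ × ℝ`. -/
noncomputable def liftedCouplingCurve (πh : Measure (ℝ × ℝ × ℝ)) (u : ℝ) : Measure ℝ :=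
  (πh.restrict {p : ℝ × ℝ × ℝ | p.1 ≤ u}).map (fun p => p.2.2)

section Aux
open Set Filter


noncomputable def subgrad (φ : ℝ → ℝ) (x : ℝ) : ℝ :=
  sInf ((fun y => (φ y - φ x) / (y - x)) '' Ioi x)

variable {φ : ℝ → ℝ}

lemma subgrad_bddBelow (hφ : ConvexOn ℝ univ φ) (x : ℝ) :
    BddBelow ((fun y => (φ y - φ x) / (y - x)) '' Ioi x) := by
  refine ⟨(φ x - φ (x - 1)) / (x - (x - 1)), ?_⟩
  rintro s ⟨y, hy, rfl⟩
  exact hφ.slope_mono_adjacent (mem_univ _) (mem_univ _) (by linarith) hy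

lemma subgrad_nonempty (x : ℝ) :
    ((fun y => (φ y - φ x) / (y - x)) '' Ioi x).Nonempty :=
  ⟨_, ⟨x + 1, by simp, rfl⟩⟩

lemma subgrad_le_slope (hφ : ConvexOn ℝ univ φ) {x y : ℝ} (h : x < y) :
    subgrad φ x ≤ (φ y - φ x) / (y - x) :=
  csInf_le (subgrad_bddBelow hφ x) ⟨y, h, rfl⟩

lemma slope_le_subgrad (hφ : ConvexOn ℝ univ φ) {x y : ℝ} (h : y < x) :
    (φ x - φ y) / (x - y) ≤ subgrad φ x := by
  refine le_csInf (subgrad_nonempty x) ?_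
  rintro s ⟨z, hz, rfl⟩
  exact hφ.slope_mono_adjacent (mem_univ _) (mem_univ _) h hz

lemma subgrad_ineq (hφ : ConvexOn ℝ univ φ) (x y : ℝ) :
    subgrad φ x * (y - x) ≤ φ y - φ x := by
  rcases lt_trichotomy x y with h | rfl | h
  · have h1 := subgrad_le_slope hφ h
    have h2 : (0:ℝ) < y - x := by linarith
    rw [le_div_iff₀ h2] at h1
    linarith
  · simp
  · have h1 := slope_le_subgrad hφ h
    have h2 : (0:ℝ) < x - y := by linarith
    rw [div_le_iff₀ h2] at h1
    nlinarith
lemma subgrad_mono (hφ : ConvexOn ℝ univ φ) : Monotone (subgrad φ) := by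
  intro a b hab
  rcases eq_or_lt_of_le hab with rfl | hab
  · exact le_refl _
  refine le_csInf (subgrad_nonempty b) ?_
  rintro s ⟨z, hz, rfl⟩
  exact (subgrad_le_slope hφ hab).trans
    (hφ.slope_mono_adjacent (mem_univ _) (mem_univ _) hab hz)


lemma clamp_bounds_pos {M t : ℝ} (hM : 0 ≤ M) (ht : 0 ≤ t) :
    0 ≤ max (-M) (min M t) ∧ max (-M) (min M t) ≤ t :=
  ⟨le_max_of_le_right (le_min hM ht), max_le (by linarith) (min_le_right _ _)⟩

lemma clamp_bounds_neg {M t : ℝ} (hM : 0 ≤ M) (ht : t ≤ 0) :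
    t ≤ max (-M) (min M t) ∧ max (-M) (min M t) ≤ 0 := by
  have h1 : min M t = t := min_eq_right (by linarith)
  rw [h1]
  exact ⟨le_max_right _ _, max_le (by linarith) ht⟩

lemma mul_clamp_le {M t d : ℝ} (hM : 0 ≤ M) :
    d * max (-M) (min M t) ≤ max (d * t) 0 := by
  rcases le_total 0 t with ht | ht
  · obtain ⟨h1, h2⟩ := clamp_bounds_pos hM ht
    rcases le_total 0 d with hd | hd
    · exact le_max_of_le_left (by nlinarith)
    · exact le_max_of_le_right (by nlinarith)
  · obtain ⟨h1, h2⟩ := clamp_bounds_neg hM ht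
    rcases le_total 0 d with hd | hd
    · exact le_max_of_le_right (by nlinarith)
    · exact le_max_of_le_left (by nlinarith)

lemma abs_clamp_le_abs {M t : ℝ} (hM : 0 ≤ M) : |max (-M) (min M t)| ≤ |t| := by
  rcases le_total 0 t with ht | ht
  · obtain ⟨h1, h2⟩ := clamp_bounds_pos hM ht
    rw [abs_of_nonneg h1, abs_of_nonneg ht]; exact h2
  · obtain ⟨h1, h2⟩ := clamp_bounds_neg hM ht
    rw [abs_of_nonpos h2, abs_of_nonpos ht]; linarith

lemma abs_clamp_le {M t : ℝ} (hM : 0 ≤ M) : |max (-M) (min M t)| ≤ M :=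
  abs_le.2 ⟨le_max_left _ _, max_le (by linarith) (min_le_left _ _)⟩

lemma clamp_eq_self {M t : ℝ} (h : |t| ≤ M) : max (-M) (min M t) = t := by
  obtain ⟨h1, h2⟩ := abs_le.1 h
  rw [min_eq_right h2, max_eq_right h1]

lemma mart_convex {γ : Measure (ℝ × ℝ × ℝ)} [IsFiniteMeasure γ] {p : ℝ}
    (hmart : ∀ f : ℝ × ℝ → ℝ, Measurable f → (∀ q, |f q| ≤ 1) →
      ∫ r, (r.2.2 - r.2.1) * f (r.1, r.2.1) ∂γ = 0)
    {φ : ℝ → ℝ} (hφ : ConvexOn ℝ Set.univ φ)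
    (hxy : Integrable (fun r : ℝ × ℝ × ℝ => r.2.2 - r.2.1) (γ.restrict {r | r.1 ≤ p}))
    (hx : Integrable (fun r : ℝ × ℝ × ℝ => φ r.2.1) (γ.restrict {r | r.1 ≤ p}))
    (hy : Integrable (fun r : ℝ × ℝ × ℝ => φ r.2.2) (γ.restrict {r | r.1 ≤ p})) :
    ∫ r, φ r.2.1 ∂(γ.restrict {r | r.1 ≤ p}) ≤ ∫ r, φ r.2.2 ∂(γ.restrict {r | r.1 ≤ p}) := by
  have hS : MeasurableSet {r : ℝ × ℝ × ℝ | r.1 ≤ p} :=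
    measurableSet_le measurable_fst measurable_const
  set ρ := γ.restrict {r : ℝ × ℝ × ℝ | r.1 ≤ p} with hρ
  set c : ℝ → ℝ := subgrad φ with hc
  have hcm : Measurable c := (subgrad_mono hφ).measurable
  have hφc : Continuous φ := by
    have h := hφ.continuousOn isOpen_univ
    exact continuousOn_univ.mp h
  set F : ℝ × ℝ × ℝ → ℝ := fun r => (r.2.2 - r.2.1) * c r.2.1 with hF
  set FN : ℕ → ℝ × ℝ × ℝ → ℝ :=
    fun N r => (r.2.2 - r.2.1) * max (-((N : ℝ) + 1)) (min ((N : ℝ) + 1) (c r.2.1)) with hFN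
  set D : ℝ × ℝ × ℝ → ℝ := fun r => φ r.2.2 - φ r.2.1 with hD
  set g : ℝ × ℝ × ℝ → ℝ := fun r => max (D r) 0 with hg
  have hx21 : Measurable fun r : ℝ × ℝ × ℝ => r.2.1 := measurable_snd.fst
  have hy22 : Measurable fun r : ℝ × ℝ × ℝ => r.2.2 := measurable_snd.snd
  have hNpos : ∀ N : ℕ, (0:ℝ) < (N : ℝ) + 1 := fun N => by positivity
  -- measurability
  have hFm : Measurable F := (hy22.sub hx21).mul (hcm.comp hx21)
  have hFNm : ∀ N, Measurable (FN N) := fun N =>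
    (hy22.sub hx21).mul (measurable_const.max (measurable_const.min (hcm.comp hx21)))
  have hDm : Measurable D := (hφc.measurable.comp hy22).sub (hφc.measurable.comp hx21)
  have hgm : Measurable g := hDm.max measurable_const
  -- martingale: ∫ FN dρ = 0
  have h0 : ∀ N : ℕ, ∫ r, FN N r ∂ρ = 0 := by
    intro N
    set fN : ℝ × ℝ → ℝ := fun a =>
      if a.1 ≤ p then max (-((N : ℝ) + 1)) (min ((N : ℝ) + 1) (c a.2)) / ((N : ℝ) + 1) else 0
      with hfN
    have hfNm : Measurable fN := by
      refine Measurable.ite (measurableSet_le measurable_fst measurable_const) ?_ measurable_const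
      exact (measurable_const.max (measurable_const.min (hcm.comp measurable_snd))).div_const _
    have hfNb : ∀ a, |fN a| ≤ 1 := by
      intro a
      simp only [hfN]
      split
      · rw [abs_div, abs_of_pos (hNpos N), div_le_one (hNpos N)]
        exact abs_clamp_le (le_of_lt (hNpos N))
      · simp
    have H := hmart fN hfNm hfNb
    have key : ∀ r : ℝ × ℝ × ℝ,
        ({r : ℝ × ℝ × ℝ | r.1 ≤ p}).indicator (FN N) r
          = ((N : ℝ) + 1) * ((r.2.2 - r.2.1) * fN (r.1, r.2.1)) := by
      intro r
      rw [Set.indicator_apply]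
      by_cases hr : r.1 ≤ p
      · simp only [hfN, mem_setOf_eq, hr, if_pos, if_true, hFN]
        field_simp
      · simp [hfN, hr]
    calc ∫ r, FN N r ∂ρ = ∫ r, ({r : ℝ × ℝ × ℝ | r.1 ≤ p}).indicator (FN N) r ∂γ := by
          rw [integral_indicator hS]
      _ = ∫ r, ((N : ℝ) + 1) * ((r.2.2 - r.2.1) * fN (r.1, r.2.1)) ∂γ := by
          exact integral_congr_ae (Filter.Eventually.of_forall key)
      _ = ((N : ℝ) + 1) * ∫ r, (r.2.2 - r.2.1) * fN (r.1, r.2.1) ∂γ := integral_const_mul _ _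
      _ = 0 := by rw [H, mul_zero]
  -- pointwise inequalities
  have hsub : ∀ r, F r ≤ D r := by
    intro r
    have := subgrad_ineq hφ r.2.1 r.2.2
    simp only [hF, hD, hc]
    nlinarith [this]
  have hFNle : ∀ N r, FN N r ≤ g r := by
    intro N r
    refine le_trans (mul_clamp_le (le_of_lt (hNpos N))) ?_
    exact max_le_max (hsub r) (le_refl 0)
  have hFNabs : ∀ N r, |FN N r| ≤ |F r| := by
    intro N r
    simp only [hFN, hF, abs_mul]
    exact mul_le_mul_of_nonneg_left (abs_clamp_le_abs (le_of_lt (hNpos N))) (abs_nonneg _)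
  -- integrability of FN
  have hFN_int : ∀ N, Integrable (FN N) ρ := by
    intro N
    have : Integrable (fun r : ℝ × ℝ × ℝ =>
        (max (-((N : ℝ) + 1)) (min ((N : ℝ) + 1) (c r.2.1))) * (r.2.2 - r.2.1)) ρ := by
      refine hxy.bdd_mul (c := (N : ℝ) + 1) ?_ (Filter.Eventually.of_forall fun r => ?_)
      · exact (measurable_const.max (measurable_const.min (hcm.comp hx21))).aestronglyMeasurable
      · exact abs_clamp_le (le_of_lt (hNpos N))
    exact this.congr (Filter.Eventually.of_forall fun r => mul_comm _ _)
  have hg_int : Integrable g ρ := (hy.sub hx).pos_part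
  -- pointwise convergence
  have htend : ∀ r, Tendsto (fun N : ℕ => FN N r) atTop (nhds (F r)) := by
    intro r
    refine Tendsto.congr' ?_ (tendsto_const_nhds : Tendsto (fun _ : ℕ => F r) atTop (nhds (F r)))
    filter_upwards [eventually_ge_atTop ⌈|c r.2.1|⌉₊] with N hN
    have h1 : |c r.2.1| ≤ (N : ℝ) + 1 := by
      calc |c r.2.1| ≤ (⌈|c r.2.1|⌉₊ : ℝ) := Nat.le_ceil _
        _ ≤ (N : ℝ) := by exact_mod_cast hN
        _ ≤ (N : ℝ) + 1 := by linarith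
    simp only [hFN, hF, clamp_eq_self h1]
  -- Fatou argument
  have hgF_nonneg : ∀ r, 0 ≤ g r - F r := fun r =>
    sub_nonneg.2 ((hsub r).trans (le_max_left _ _))
  have key : ∫⁻ r, ENNReal.ofReal (g r - F r) ∂ρ ≤ ENNReal.ofReal (∫ r, g r ∂ρ) := by
    have heq : (fun r => ENNReal.ofReal (g r - F r))
        = fun r => liminf (fun N => ENNReal.ofReal (g r - FN N r)) atTop := by
      funext r
      refine (Filter.Tendsto.liminf_eq ?_).symm
      exact (ENNReal.continuous_ofReal.tendsto _).comp (Filter.Tendsto.const_sub _ (htend r))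
    rw [heq]
    refine le_trans (lintegral_liminf_le fun N =>
      ENNReal.measurable_ofReal.comp (hgm.sub (hFNm N))) ?_
    have hval : ∀ N : ℕ, ∫⁻ r, ENNReal.ofReal (g r - FN N r) ∂ρ = ENNReal.ofReal (∫ r, g r ∂ρ) := by
      intro N
      rw [← ofReal_integral_eq_lintegral_ofReal (f := fun r => g r - FN N r)
        (hg_int.sub (hFN_int N))
        (Filter.Eventually.of_forall fun r => sub_nonneg.2 (hFNle N r))]
      rw [integral_sub hg_int (hFN_int N), h0 N, sub_zero]
    simp only [hval]
    rw [liminf_const]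
  have hgF_int : Integrable (fun r => g r - F r) ρ := by
    refine ⟨(hgm.sub hFm).aestronglyMeasurable, ?_⟩
    rw [hasFiniteIntegral_iff_ofReal (Filter.Eventually.of_forall hgF_nonneg)]
    exact lt_of_le_of_lt key ENNReal.ofReal_lt_top
  have hF_int : Integrable F ρ :=
    (hg_int.sub hgF_int).congr (Filter.Eventually.of_forall fun r => by simp only [Pi.sub_apply]; ring)
  have hle1 : ∫ r, (g r - F r) ∂ρ ≤ ∫ r, g r ∂ρ := by
    rw [integral_eq_lintegral_of_nonneg_ae (Filter.Eventually.of_forall hgF_nonneg)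
      (hgm.sub hFm).aestronglyMeasurable]
    calc (∫⁻ r, ENNReal.ofReal (g r - F r) ∂ρ).toReal
        ≤ (ENNReal.ofReal (∫ r, g r ∂ρ)).toReal :=
          ENNReal.toReal_mono ENNReal.ofReal_ne_top key
      _ = ∫ r, g r ∂ρ := ENNReal.toReal_ofReal (integral_nonneg fun r => le_max_right _ _)
  have hF_nonneg : 0 ≤ ∫ r, F r ∂ρ := by
    rw [integral_sub hg_int hF_int] at hle1
    linarith
  have hFD : ∫ r, F r ∂ρ ≤ ∫ r, D r ∂ρ :=
    integral_mono hF_int (hy.sub hx) hsub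
  have : ∫ r, D r ∂ρ = (∫ r, φ r.2.2 ∂ρ) - ∫ r, φ r.2.1 ∂ρ := integral_sub hy hx
  linarith

lemma convexOn_abs_sub (q : ℝ) : ConvexOn ℝ Set.univ (fun y : ℝ => |y - q|) := by
  refine ⟨convex_univ, fun x _ y _ a b ha hb hab => ?_⟩
  simp only [smul_eq_mul]
  calc |a * x + b * y - q| = |a * (x - q) + b * (y - q)| := by
        congr 1; linear_combination q * hab
    _ ≤ |a * (x - q)| + |b * (y - q)| := abs_add_le _ _
    _ = a * |x - q| + b * |y - q| := by
        rw [abs_mul, abs_mul, abs_of_nonneg ha, abs_of_nonneg hb]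

lemma integral_ite_curve (γh : Measure (ℝ × ℝ × ℝ)) (p q : ℝ) :
    ∫ r, (if r.1 ≤ p then |r.2.2 - q| else 0) ∂γh
      = ∫ y, |y - q| ∂(liftedCouplingCurve γh p) := by
  have hS : MeasurableSet {r : ℝ × ℝ × ℝ | r.1 ≤ p} :=
    measurableSet_le measurable_fst measurable_const
  rw [liftedCouplingCurve,
    integral_map measurable_snd.snd.aemeasurable
      ((Continuous.abs (by continuity) : Continuous fun y : ℝ => |y - q|)).aestronglyMeasurable,
    ← integral_indicator hS]
  exact integral_congr_ae (Filter.Eventually.of_forall fun r => by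
    rw [Set.indicator_apply]; rfl)

section main

variable {μ ν : Measure ℝ} [IsProbabilityMeasure μ] [IsProbabilityMeasure ν]
  {μh : Measure (ℝ × ℝ)} {γh : Measure (ℝ × ℝ × ℝ)} {p : ℝ}

lemma prob_of_lifted (hγ : IsLiftedMartingaleCoupling γh μh ν) :
    IsProbabilityMeasure γh := by
  constructor
  rw [← Set.preimage_univ (f := fun r : ℝ × ℝ × ℝ => r.2.2),
    ← Measure.map_apply measurable_snd.snd MeasurableSet.univ, hγ.2.1, measure_univ]

lemma liftCurve_eq (hγ : IsLiftedMartingaleCoupling γh μh ν) :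
    liftCurve μh p = (γh.restrict {r : ℝ × ℝ × ℝ | r.1 ≤ p}).map (fun r => r.2.1) := by
  rw [← hγ.1, liftCurve,
    Measure.restrict_map (measurable_fst.prodMk measurable_snd.fst)
      (measurableSet_le measurable_fst measurable_const : MeasurableSet {a : ℝ × ℝ | a.1 ≤ p}),
    Measure.map_map measurable_snd (measurable_fst.prodMk measurable_snd.fst)]
  rfl

lemma curve_le (hγ : IsLiftedMartingaleCoupling γh μh ν) :
    liftedCouplingCurve γh p ≤ ν := by
  rw [← hγ.2.1, liftedCouplingCurve]
  exact Measure.map_mono Measure.restrict_le_self measurable_snd.snd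

lemma convexOrder_curves (hμ : Integrable (fun x : ℝ => x) μ)
    (hν : Integrable (fun x : ℝ => x) ν) (hlift₂ : μh.map Prod.snd = μ)
    (hγ : IsLiftedMartingaleCoupling γh μh ν) :
    ConvexOrder (liftCurve μh p) (liftedCouplingCurve γh p) := by
  haveI := prob_of_lifted hγ
  intro φ hφ h1 h2
  have hφc : Continuous φ :=
    continuousOn_univ.mp (hφ.continuousOn isOpen_univ)
  rw [liftCurve_eq hγ] at h1 ⊢
  rw [liftedCouplingCurve] at h2 ⊢
  rw [integral_map measurable_snd.fst.aemeasurable hφc.aestronglyMeasurable,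
    integral_map measurable_snd.snd.aemeasurable hφc.aestronglyMeasurable]
  have hx := (integrable_map_measure hφc.aestronglyMeasurable
    measurable_snd.fst.aemeasurable).mp h1
  have hy := (integrable_map_measure hφc.aestronglyMeasurable
    measurable_snd.snd.aemeasurable).mp h2
  -- integrability of y - x
  have hyint : Integrable (fun r : ℝ × ℝ × ℝ => r.2.2) γh := by
    have h := hν
    rw [← hγ.2.1] at h
    exact (integrable_map_measure aestronglyMeasurable_id
      measurable_snd.snd.aemeasurable).mp h
  have hxint : Integrable (fun r : ℝ × ℝ × ℝ => r.2.1) γh := by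
    have hmap : γh.map (fun r : ℝ × ℝ × ℝ => r.2.1) = μ := by
      rw [← hlift₂, ← hγ.1,
        Measure.map_map measurable_snd (measurable_fst.prodMk measurable_snd.fst)]
      rfl
    have h := hμ
    rw [← hmap] at h
    exact (integrable_map_measure aestronglyMeasurable_id
      measurable_snd.fst.aemeasurable).mp h
  have hsubint : Integrable (fun r : ℝ × ℝ × ℝ => r.2.2 - r.2.1) γh := hyint.sub hxint
  exact mart_convex hγ.2.2 hφ hsubint.restrict hx hy

end main

end Aux

/-- The lifted shadow coupling minimizes `γ̂ ↦ ∫ 1_{u ≤ p} |y − q| dγ̂` over all lifted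
martingale couplings, for every `p ∈ [0,1]` and `q ∈ ℝ`. -/
theorem liftedShadowCoupling_optimal (μ ν : Measure ℝ)
    [IsProbabilityMeasure μ] [IsProbabilityMeasure ν]
    (hμ : Integrable (fun x : ℝ => x) μ) (hν : Integrable (fun x : ℝ => x) ν)
    (hμν : ConvexOrder μ ν)
    (μh : Measure (ℝ × ℝ))
    (hlift₁ : μh.map Prod.fst = volume.restrict (Set.Icc (0:ℝ) 1))
    (hlift₂ : μh.map Prod.snd = μ)
    (πh : Measure (ℝ × ℝ × ℝ))
    (hπ : IsLiftedMartingaleCoupling πh μh ν)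
    (hπshadow : ∀ u ∈ Set.Icc (0:ℝ) 1,
      IsShadow (liftCurve μh u) ν (liftedCouplingCurve πh u)) :
    ∀ p ∈ Set.Icc (0:ℝ) 1, ∀ q : ℝ,
      ∀ γh : Measure (ℝ × ℝ × ℝ), IsLiftedMartingaleCoupling γh μh ν →
        ∫ r, (if r.1 ≤ p then |r.2.2 - q| else 0) ∂πh ≤
          ∫ r, (if r.1 ≤ p then |r.2.2 - q| else 0) ∂γh := by
  intro p hp q γh hγ
  obtain ⟨hs1, hs2, hs3⟩ := hπshadow p hp
  have hBγ : liftedCouplingCurve γh p ≤ ν := curve_le hγ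
  have hCγ : ConvexOrder (liftCurve μh p) (liftedCouplingCurve γh p) :=
    convexOrder_curves hμ hν hlift₂ hγ
  have hco : ConvexOrder (liftedCouplingCurve πh p) (liftedCouplingCurve γh p) :=
    hs3 _ hCγ hBγ
  have hint : Integrable (fun y : ℝ => |y - q|) ν := (hν.sub (integrable_const q)).abs
  rw [integral_ite_curve, integral_ite_curve]
  exact hco _ (convexOn_abs_sub q) (hint.mono_measure hs2) (hint.mono_measure hBγ)
end

section
/- Let π̂ be a probability measure on [0,1] × ℝ × ℝ concentrated on a monotone set Γ̂, i.e. a Borel set such that whenever s < t and (s,x,y⁻), (s,x,y⁺), (t,x',y') ∈ Γ̂, then y' ∉ (y⁻, y⁺). Suppose π̂ is also a lifted martingale coupling of μ̂ ∈ Π(λ,μ) and ν. Then there exist Borel maps T_up, T_down: [0,1] × ℝ → ℝ with T_down(u,x) ≤ x ≤ T_up(u,x) such that π̂ gives full measure to {(u, x, T_i(u,x)) : i ∈ {up, down}, (u,x) ∈ [0,1] × ℝ}. -/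
open MeasureTheory

/-- A monotone set in `[0,1] × ℝ × ℝ`. -/
def MonotoneSet (Γ : Set (ℝ × ℝ × ℝ)) : Prop :=
  ∀ s t x x' ym yp y' : ℝ, s < t →
    (s, x, ym) ∈ Γ → (s, x, yp) ∈ Γ → (t, x', y') ∈ Γ → y' ∉ Set.Ioo ym yp


open Set in
lemma massPts_compl_null (m : Measure ℝ) :
    m {y : ℝ | ∀ ε, 0 < ε → m (Ioo (y - ε) (y + ε)) ≠ 0}ᶜ = 0 := by
  set T := {y : ℝ | ∀ ε, 0 < ε → m (Ioo (y - ε) (y + ε)) ≠ 0} with hT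
  classical
  have hsub : Tᶜ ⊆ ⋃ p : ℚ × ℚ,
      if m (Ioo (p.1 : ℝ) (p.2 : ℝ)) = 0 then Ioo (p.1 : ℝ) (p.2 : ℝ) else ∅ := by
    intro y hy
    simp only [hT, mem_compl_iff, mem_setOf_eq, not_forall] at hy
    obtain ⟨ε, hε, h0⟩ := hy
    rw [not_ne_iff] at h0
    obtain ⟨p1, hp1, hp1'⟩ := exists_rat_btwn (show y - ε < y by linarith)
    obtain ⟨p2, hp2, hp2'⟩ := exists_rat_btwn (show y < y + ε by linarith)
    refine mem_iUnion.2 ⟨(p1, p2), ?_⟩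
    have hsub2 : Ioo (p1 : ℝ) (p2 : ℝ) ⊆ Ioo (y - ε) (y + ε) :=
      Ioo_subset_Ioo hp1.le hp2'.le
    rw [if_pos (measure_mono_null hsub2 h0)]
    exact ⟨hp1', hp2⟩
  refine measure_mono_null hsub (measure_iUnion_null fun p => ?_)
  split_ifs with h
  · exact h
  · exact measure_empty

open Set in
lemma twoPoint (m : Measure ℝ) [IsProbabilityMeasure m] (x : ℝ)
    (hq : ∀ q1 q2 q3 q4 : ℚ, q1 < q2 → q2 ≤ q3 → q3 < q4 →
      m (Iic (q1 : ℝ)) = 0 ∨ m (Icc (q2 : ℝ) (q3 : ℝ)) = 0 ∨ m (Ici (q4 : ℝ)) = 0)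
    (hbi : Integrable (fun y => y - x) m) (hb : ∫ y, (y - x) ∂m = 0) :
    (m (Ioi x) ≠ 0 → ∃ b, x < b ∧ m (Ioi x \ {b}) = 0) ∧
    (m (Iio x) ≠ 0 → ∃ b, b < x ∧ m (Iio x \ {b}) = 0) ∧
    (m {x} ≠ 0 → m (Ioi x) = 0 ∨ m (Iio x) = 0) := by
  set T := {y : ℝ | ∀ ε, 0 < ε → m (Ioo (y - ε) (y + ε)) ≠ 0} with hT
  have hTc : m Tᶜ = 0 := massPts_compl_null m
  have hne : ∀ s : Set ℝ, m s ≠ 0 → (T ∩ s).Nonempty := by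
    intro s hs
    rcases (T ∩ s).eq_empty_or_nonempty with h | h
    · refine absurd (measure_mono_null ?_ hTc) hs
      intro y hy hyT
      exact (eq_empty_iff_forall_notMem.mp h y) ⟨hyT, hy⟩
    · exact h
  have h3 : ∀ y1 y2 y3 : ℝ, y1 ∈ T → y2 ∈ T → y3 ∈ T → y1 < y2 → y2 < y3 → False := by
    intro y1 y2 y3 h1 h2 h3' h12 h23
    set ε := min (y2 - y1) (y3 - y2) / 3 with hε
    have hεpos : 0 < ε := by
      apply div_pos (lt_min (by linarith) (by linarith)) (by norm_num)
    have hε1 : 3 * ε ≤ y2 - y1 := by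
      have := min_le_left (y2 - y1) (y3 - y2); rw [hε]; linarith
    have hε2 : 3 * ε ≤ y3 - y2 := by
      have := min_le_right (y2 - y1) (y3 - y2); rw [hε]; linarith
    obtain ⟨q1, hq1, hq1'⟩ := exists_rat_btwn (show y1 + ε < y2 - ε by linarith)
    obtain ⟨q2, hq2, hq2'⟩ := exists_rat_btwn hq1'
    obtain ⟨q3, hq3, hq3'⟩ := exists_rat_btwn (show y2 + ε < y3 - ε by linarith)
    obtain ⟨q4, hq4, hq4'⟩ := exists_rat_btwn hq3'
    have hq12 : q1 < q2 := by exact_mod_cast hq2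
    have hq23 : q2 ≤ q3 := by
      have h : (q2 : ℝ) ≤ (q3 : ℝ) := by linarith
      exact_mod_cast h
    have hq34 : q3 < q4 := by exact_mod_cast hq4
    have hpos1 : m (Iic (q1 : ℝ)) ≠ 0 := fun h =>
      h1 ε hεpos (measure_mono_null (fun y hy => by
        simp only [mem_Iic]; have := hy.2; simp only [mem_Ioo] at hy; linarith [hy.2]) h)
    have hpos2 : m (Icc (q2 : ℝ) (q3 : ℝ)) ≠ 0 := fun h =>
      h2 ε hεpos (measure_mono_null (fun y hy => by
        simp only [mem_Ioo] at hy; simp only [mem_Icc]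
        constructor <;> linarith [hy.1, hy.2]) h)
    have hpos3 : m (Ici (q4 : ℝ)) ≠ 0 := fun h =>
      h3' ε hεpos (measure_mono_null (fun y hy => by
        simp only [mem_Ioo] at hy; simp only [mem_Ici]; linarith [hy.1]) h)
    rcases hq q1 q2 q3 q4 hq12 hq23 hq34 with h | h | h
    · exact hpos1 h
    · exact hpos2 h
    · exact hpos3 h
  have hbelow : ∃ c ∈ T, c ≤ x := by
    by_contra hc
    push_neg at hc
    have hIic : m (Iic x) = 0 := by
      refine measure_mono_null ?_ hTc
      intro y hy hyT
      exact absurd hy (not_le.2 (hc y hyT))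
    have hae : 0 ≤ᵐ[m] fun y => y - x := by
      rw [Filter.EventuallyLE, ae_iff]
      refine measure_mono_null (fun y hy => ?_) hIic
      simp only [Pi.zero_apply, mem_setOf_eq, not_le] at hy
      simp only [mem_Iic]; linarith
    have heq := (integral_eq_zero_iff_of_nonneg_ae hae hbi).mp hb
    have hax : ∀ᵐ y ∂m, y = x := by
      filter_upwards [heq] with y hy
      simpa [sub_eq_zero] using hy
    have hxc : m ({x}ᶜ) = 0 := by
      rw [ae_iff] at hax
      exact measure_mono_null (fun y hy h => hy h) hax
    have h1 : m {x} = 0 :=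
      measure_mono_null (Set.singleton_subset_iff.2 (Set.mem_Iic.2 le_rfl)) hIic
    have hle : m Set.univ ≤ m {x} + m ({x}ᶜ) := by
      rw [← Set.union_compl_self ({x} : Set ℝ)]
      exact measure_union_le _ _
    rw [measure_univ, h1, hxc] at hle
    norm_num at hle
  have habove : ∃ c ∈ T, x ≤ c := by
    by_contra hc
    push_neg at hc
    have hIci : m (Ici x) = 0 := by
      refine measure_mono_null ?_ hTc
      intro y hy hyT
      exact absurd hy (not_le.2 (hc y hyT))
    have hbi' : Integrable (fun y => x - y) m := by
      have heq : (fun y : ℝ => x - y) = fun y => -(y - x) := by funext y; ring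
      rw [heq]; exact hbi.neg
    have hb' : ∫ y, (x - y) ∂m = 0 := by
      have : ∫ y, (x - y) ∂m = - ∫ y, (y - x) ∂m := by
        rw [← integral_neg]; congr 1; funext y; ring
      rw [this, hb, neg_zero]
    have hae : 0 ≤ᵐ[m] fun y => x - y := by
      rw [Filter.EventuallyLE, ae_iff]
      refine measure_mono_null (fun y hy => ?_) hIci
      simp only [Pi.zero_apply, mem_setOf_eq, not_le] at hy
      simp only [mem_Ici]; linarith
    have heq := (integral_eq_zero_iff_of_nonneg_ae hae hbi').mp hb'
    have hax : ∀ᵐ y ∂m, y = x := by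
      filter_upwards [heq] with y hy
      have h0 : x - y = 0 := by simpa using hy
      linarith
    have hxc : m ({x}ᶜ) = 0 := by
      rw [ae_iff] at hax
      exact measure_mono_null (fun y hy h => hy h) hax
    have h1 : m {x} = 0 :=
      measure_mono_null (Set.singleton_subset_iff.2 (Set.mem_Ici.2 le_rfl)) hIci
    have hle : m Set.univ ≤ m {x} + m ({x}ᶜ) := by
      rw [← Set.union_compl_self ({x} : Set ℝ)]
      exact measure_union_le _ _
    rw [measure_univ, h1, hxc] at hle
    norm_num at hle
  refine ⟨?_, ?_, ?_⟩
  · intro hIoi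
    obtain ⟨b, hbT, hbx⟩ := hne (Ioi x) hIoi
    refine ⟨b, hbx, ?_⟩
    refine measure_mono_null ?_ hTc
    intro y hy hyT
    obtain ⟨c, hcT, hcx⟩ := hbelow
    have hyb : y ≠ b := hy.2
    have hyx : x < y := hy.1
    rcases lt_or_gt_of_ne hyb with h | h
    · exact h3 c y b hcT hyT hbT (lt_of_le_of_lt hcx hyx) h
    · exact h3 c b y hcT hbT hyT (lt_of_le_of_lt hcx hbx) h
  · intro hIio
    obtain ⟨b, hbT, hbx⟩ := hne (Iio x) hIio
    refine ⟨b, hbx, ?_⟩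
    refine measure_mono_null ?_ hTc
    intro y hy hyT
    obtain ⟨c, hcT, hcx⟩ := habove
    have hyb : y ≠ b := hy.2
    have hyx : y < x := hy.1
    rcases lt_or_gt_of_ne hyb with h | h
    · exact h3 y b c hyT hbT hcT h (lt_of_lt_of_le hbx hcx)
    · exact h3 b y c hbT hyT hcT h (lt_of_lt_of_le hyx hcx)
  · intro hx0
    have hxT : x ∈ T := fun ε hε h0 =>
      hx0 (measure_mono_null (singleton_subset_iff.2 (mem_Ioo.2 ⟨by linarith, by linarith⟩)) h0)
    by_contra hcon
    push_neg at hcon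
    obtain ⟨h1, h2⟩ := hcon
    obtain ⟨b, hbT, hbx⟩ := hne (Ioi x) h1
    obtain ⟨c, hcT, hcx⟩ := hne (Iio x) h2
    exact h3 c x b hcT hxT hbT hcx hbx


open Set in
lemma upValue (m : Measure ℝ) [IsProbabilityMeasure m] {x b : ℝ} (hxb : x < b)
    (hm : m (Ioi x) ≠ 0) (h0 : m (Ioi x \ {b}) = 0) :
    x + (∫ y, max (y - x) 0 ∂m) / (m (Ioi x)).toReal = b := by
  have hbm : m (Ioi x) = m {b} := by
    apply le_antisymm
    · calc m (Ioi x) ≤ m ((Ioi x \ {b}) ∪ {b}) := by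
            refine measure_mono ?_
            intro y hy
            by_cases h : y = b
            · exact Set.mem_union_right _ (by simp [h])
            · exact Set.mem_union_left _ ⟨hy, h⟩
        _ ≤ m (Ioi x \ {b}) + m {b} := measure_union_le _ _
        _ = m {b} := by rw [h0, zero_add]
    · exact measure_mono (singleton_subset_iff.2 hxb)
  have key : ∀ y, y ∉ Ioi x \ {b} → max (y - x) 0 = Set.indicator {b} (fun _ => b - x) y := by
    intro y hy
    by_cases hyb : y = b
    · subst hyb
      rw [Set.indicator_of_mem (Set.mem_singleton _) _]
      exact max_eq_left (by linarith)
    · have hyx : ¬ x < y := fun h => hy ⟨h, hyb⟩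
      rw [Set.indicator_of_notMem (by simpa using hyb)]
      exact max_eq_right (by push_neg at hyx; linarith)
  have hae : (fun y => max (y - x) 0) =ᵐ[m] Set.indicator {b} (fun _ => b - x) := by
    rw [Filter.EventuallyEq, ae_iff]
    refine measure_mono_null ?_ h0
    intro y hy
    simp only [mem_setOf_eq] at hy
    by_contra h
    exact hy (key y h)
  have hint : ∫ y, max (y - x) 0 ∂m = (m {b}).toReal * (b - x) := by
    rw [integral_congr_ae hae, integral_indicator_const _ (measurableSet_singleton b)]
    simp [smul_eq_mul, Measure.real]
  rw [hint, hbm]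
  have h1 : (m {b}).toReal ≠ 0 := by
    have hne : m {b} ≠ 0 := hbm ▸ hm
    simp [ENNReal.toReal_eq_zero_iff, hne, measure_ne_top]
  rw [mul_comm, mul_div_assoc, div_self h1, mul_one]
  ring

open Set in
lemma downValue (m : Measure ℝ) [IsProbabilityMeasure m] {x b : ℝ} (hxb : b < x)
    (hm : m (Iio x) ≠ 0) (h0 : m (Iio x \ {b}) = 0) :
    x - (∫ y, max (x - y) 0 ∂m) / (m (Iio x)).toReal = b := by
  have hbm : m (Iio x) = m {b} := by
    apply le_antisymm
    · calc m (Iio x) ≤ m ((Iio x \ {b}) ∪ {b}) := by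
            refine measure_mono ?_
            intro y hy
            by_cases h : y = b
            · exact Set.mem_union_right _ (by simp [h])
            · exact Set.mem_union_left _ ⟨hy, h⟩
        _ ≤ m (Iio x \ {b}) + m {b} := measure_union_le _ _
        _ = m {b} := by rw [h0, zero_add]
    · exact measure_mono (singleton_subset_iff.2 hxb)
  have key : ∀ y, y ∉ Iio x \ {b} → max (x - y) 0 = Set.indicator {b} (fun _ => x - b) y := by
    intro y hy
    by_cases hyb : y = b
    · subst hyb
      rw [Set.indicator_of_mem (Set.mem_singleton _) _]
      exact max_eq_left (by linarith)
    · have hyx : ¬ y < x := fun h => hy ⟨h, hyb⟩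
      rw [Set.indicator_of_notMem (by simpa using hyb)]
      exact max_eq_right (by push_neg at hyx; linarith)
  have hae : (fun y => max (x - y) 0) =ᵐ[m] Set.indicator {b} (fun _ => x - b) := by
    rw [Filter.EventuallyEq, ae_iff]
    refine measure_mono_null ?_ h0
    intro y hy
    simp only [mem_setOf_eq] at hy
    by_contra h
    exact hy (key y h)
  have hint : ∫ y, max (x - y) 0 ∂m = (m {b}).toReal * (x - b) := by
    rw [integral_congr_ae hae, integral_indicator_const _ (measurableSet_singleton b)]
    simp [smul_eq_mul, Measure.real]
  rw [hint, hbm]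
  have h1 : (m {b}).toReal ≠ 0 := by
    have hne : m {b} ≠ 0 := hbm ▸ hm
    simp [ENNReal.toReal_eq_zero_iff, hne, measure_ne_top]
  rw [mul_comm, mul_div_assoc, div_self h1, mul_one]
  ring

/-- A lifted martingale coupling concentrated on a monotone set is concentrated on the
graphs of two maps `T_down ≤ id ≤ T_up`. -/
theorem monotone_coupling_two_graphs (μ ν : Measure ℝ)
    [IsProbabilityMeasure μ] [IsProbabilityMeasure ν]
    (hμ : Integrable (fun x : ℝ => x) μ) (hν : Integrable (fun x : ℝ => x) ν)
    (μh : Measure (ℝ × ℝ))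
    (hlift₁ : μh.map Prod.fst = volume.restrict (Set.Icc (0:ℝ) 1))
    (hlift₂ : μh.map Prod.snd = μ)
    (πh : Measure (ℝ × ℝ × ℝ))
    (hπ : IsLiftedMartingaleCoupling πh μh ν)
    (Γ : Set (ℝ × ℝ × ℝ)) (hΓmeas : MeasurableSet Γ) (hΓ : MonotoneSet Γ)
    (hfull : πh Γ = 1) :
    ∃ Tup Tdown : ℝ × ℝ → ℝ, Measurable Tup ∧ Measurable Tdown ∧
      (∀ u x : ℝ, Tdown (u, x) ≤ x ∧ x ≤ Tup (u, x)) ∧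
      πh {p : ℝ × ℝ × ℝ | p.2.2 = Tup (p.1, p.2.1) ∨ p.2.2 = Tdown (p.1, p.2.1)} = 1 := by
  classical
  obtain ⟨hmarg1, hmarg2, hmart⟩ := hπ
  set e : ℝ × ℝ × ℝ ≃ᵐ (ℝ × ℝ) × ℝ :=
    (MeasurableEquiv.prodAssoc (α := ℝ) (β := ℝ) (γ := ℝ)).symm with he
  have hmeas_y : Measurable fun p : ℝ × ℝ × ℝ => p.2.2 := measurable_snd.comp measurable_snd
  have hmeas_ux : Measurable fun p : ℝ × ℝ × ℝ => (p.1, p.2.1) :=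
    measurable_fst.prodMk (measurable_fst.comp measurable_snd)
  have hπuniv : πh Set.univ = 1 := by
    have h := congrArg (fun m : Measure ℝ => m Set.univ) hmarg2
    rw [Measure.map_apply hmeas_y MeasurableSet.univ, Set.preimage_univ] at h
    rw [h, measure_univ]
  haveI : IsProbabilityMeasure πh := ⟨hπuniv⟩
  set ρ : Measure ((ℝ × ℝ) × ℝ) := πh.map e with hρ
  haveI : IsProbabilityMeasure ρ := Measure.isProbabilityMeasure_map e.measurable.aemeasurable
  have hfst : ρ.fst = μh := by
    rw [hρ]
    show (πh.map e).map Prod.fst = μh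
    rw [Measure.map_map measurable_fst e.measurable]
    exact hmarg1
  have hμhuniv : μh Set.univ = 1 := by
    have h := congrArg (fun m : Measure ℝ => m Set.univ) hlift₁
    rw [Measure.map_apply measurable_fst MeasurableSet.univ, Set.preimage_univ] at h
    rw [h, Measure.restrict_apply_univ, Real.volume_Icc]
    norm_num
  haveI : IsProbabilityMeasure μh := ⟨hμhuniv⟩
  set Γ₂ : Set ((ℝ × ℝ) × ℝ) := (fun q : (ℝ × ℝ) × ℝ => (q.1.1, q.1.2, q.2)) ⁻¹' Γ with hΓ₂
  have hΓ₂meas : MeasurableSet Γ₂ := hΓmeas.preimage (by fun_prop)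
  have hΓ₂full : ρ Γ₂ = 1 := by
    rw [hρ, MeasurableEquiv.map_apply]
    exact hfull
  set κ := ρ.condKernel with hκ
  -- definitions of the two maps
  set Tup : ℝ × ℝ → ℝ :=
    fun a => a.2 + (∫ y, max (y - a.2) 0 ∂κ a) / (κ a (Set.Ioi a.2)).toReal with hTup
  set Tdown : ℝ × ℝ → ℝ :=
    fun a => a.2 - (∫ y, max (a.2 - y) 0 ∂κ a) / (κ a (Set.Iio a.2)).toReal with hTdown
  -- measurability
  have hmUp : Measurable fun a : ℝ × ℝ => κ a (Set.Ioi a.2) := by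
    have h := ProbabilityTheory.Kernel.measurable_kernel_prodMk_left (κ := κ)
      (show MeasurableSet {q : (ℝ × ℝ) × ℝ | q.1.2 < q.2} from
        measurableSet_lt (measurable_snd.comp measurable_fst) measurable_snd)
    exact h
  have hmDown : Measurable fun a : ℝ × ℝ => κ a (Set.Iio a.2) := by
    have h := ProbabilityTheory.Kernel.measurable_kernel_prodMk_left (κ := κ)
      (show MeasurableSet {q : (ℝ × ℝ) × ℝ | q.2 < q.1.2} from
        measurableSet_lt measurable_snd (measurable_snd.comp measurable_fst))
    exact h
  have hIUp : Measurable fun a : ℝ × ℝ => ∫ y, max (y - a.2) 0 ∂κ a := by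
    have h : StronglyMeasurable fun q : (ℝ × ℝ) × ℝ => max (q.2 - q.1.2) 0 :=
      ((measurable_snd.sub (measurable_snd.comp measurable_fst)).max
        measurable_const).stronglyMeasurable
    exact h.integral_kernel_prod_right'.measurable
  have hIDown : Measurable fun a : ℝ × ℝ => ∫ y, max (a.2 - y) 0 ∂κ a := by
    have h : StronglyMeasurable fun q : (ℝ × ℝ) × ℝ => max (q.1.2 - q.2) 0 :=
      (((measurable_snd.comp measurable_fst).sub measurable_snd).max
        measurable_const).stronglyMeasurable
    exact h.integral_kernel_prod_right'.measurable
  have hTupMeas : Measurable Tup :=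
    measurable_snd.add (hIUp.div hmUp.ennreal_toReal)
  have hTdownMeas : Measurable Tdown :=
    measurable_snd.sub (hIDown.div hmDown.ennreal_toReal)
  -- bounds
  have hbound : ∀ u x : ℝ, Tdown (u, x) ≤ x ∧ x ≤ Tup (u, x) := by
    intro u x
    constructor
    · have h1 : 0 ≤ (∫ y, max ((u, x).2 - y) 0 ∂κ (u, x)) / (κ (u, x) (Set.Iio (u, x).2)).toReal :=
        div_nonneg (integral_nonneg fun y => le_max_right _ _) ENNReal.toReal_nonneg
      simp only [hTdown]
      linarith [h1]
    · have h1 : 0 ≤ (∫ y, max (y - (u, x).2) 0 ∂κ (u, x)) / (κ (u, x) (Set.Ioi (u, x).2)).toReal :=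
        div_nonneg (integral_nonneg fun y => le_max_right _ _) ENNReal.toReal_nonneg
      simp only [hTup]
      linarith [h1]
  -- a.e. the fiber of Γ carries full conditional mass
  have hfib : ∀ᵐ a ∂ρ.fst, κ a {y | (a.1, a.2, y) ∈ Γ} = 1 := by
    have hc : ρ Γ₂ᶜ = 0 := by
      rw [measure_compl hΓ₂meas (measure_ne_top ρ _), hΓ₂full, measure_univ, tsub_self]
    have h0 : ∫⁻ a, κ a {y | (a, y) ∈ Γ₂ᶜ} ∂ρ.fst = 0 := by
      rw [Measure.lintegral_condKernel_mem hΓ₂meas.compl, hc]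
    have hmeasfun : Measurable fun a : ℝ × ℝ => κ a (Prod.mk a ⁻¹' Γ₂ᶜ) :=
      ProbabilityTheory.Kernel.measurable_kernel_prodMk_left hΓ₂meas.compl
    have h1 := (lintegral_eq_zero_iff hmeasfun).mp h0
    filter_upwards [h1] with a ha
    simp only [Pi.zero_apply] at ha
    have hmeas_fib : MeasurableSet {y : ℝ | (a.1, a.2, y) ∈ Γ} :=
      hΓmeas.preimage (measurable_const.prodMk (measurable_const.prodMk measurable_id))
    have hcompl : κ a {y : ℝ | (a.1, a.2, y) ∈ Γ}ᶜ = 0 := ha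
    haveI : IsProbabilityMeasure (κ a) := inferInstance
    exact (prob_compl_eq_zero_iff hmeas_fib).mp hcompl
  -- integrability of the coordinates
  have hInty : Integrable (fun q : (ℝ × ℝ) × ℝ => q.2) ρ := by
    rw [hρ, integrable_map_equiv]
    have hν' : Integrable (fun x : ℝ => x) (πh.map (fun p : ℝ × ℝ × ℝ => p.2.2)) :=
      hmarg2.symm ▸ hν
    exact (integrable_map_measure aestronglyMeasurable_id hmeas_y.aemeasurable).mp hν'
  have hmapx : πh.map (fun p : ℝ × ℝ × ℝ => p.2.1) = μ := by
    rw [← hlift₂, ← hmarg1, Measure.map_map measurable_snd hmeas_ux]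
    rfl
  have hIntx : Integrable (fun q : (ℝ × ℝ) × ℝ => q.1.2) ρ := by
    rw [hρ, integrable_map_equiv]
    have hμ' : Integrable (fun x : ℝ => x) (πh.map (fun p : ℝ × ℝ × ℝ => p.2.1)) :=
      hmapx.symm ▸ hμ
    exact (integrable_map_measure aestronglyMeasurable_id (by fun_prop)).mp hμ'
  have hInt : Integrable (fun q : (ℝ × ℝ) × ℝ => q.2 - q.1.2) ρ := hInty.sub hIntx
  -- barycenter property a.e.
  set g : ℝ × ℝ → ℝ := fun a => ∫ y, (y - a.2) ∂κ a with hgdef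
  have hgSM : StronglyMeasurable g := by
    have h : StronglyMeasurable fun q : (ℝ × ℝ) × ℝ => q.2 - q.1.2 :=
      (measurable_snd.sub (measurable_snd.comp measurable_fst)).stronglyMeasurable
    exact h.integral_kernel_prod_right'
  set f : ℝ × ℝ → ℝ := fun a => if 0 ≤ g a then 1 else -1 with hfdef
  have hfmeas : Measurable f :=
    Measurable.ite (measurableSet_le measurable_const hgSM.measurable)
      measurable_const measurable_const
  have hfbd : ∀ q, |f q| ≤ 1 := by
    intro q
    simp only [hfdef]
    split_ifs <;> simp
  have hmart0 := hmart f hfmeas hfbd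
  have hρint : ∫ q, (q.2 - q.1.2) * f q.1 ∂ρ = 0 := by
    rw [hρ, integral_map_equiv]
    exact hmart0
  have hFint : Integrable (fun q : (ℝ × ℝ) × ℝ => (q.2 - q.1.2) * f q.1) ρ := by
    refine hInt.mono ?_ ?_
    · exact ((measurable_snd.sub (measurable_snd.comp measurable_fst)).mul
        (hfmeas.comp measurable_fst)).aestronglyMeasurable
    · refine Filter.Eventually.of_forall fun q => ?_
      rw [norm_mul]
      have h1 : ‖f q.1‖ ≤ 1 := by rw [Real.norm_eq_abs]; exact hfbd q.1
      calc ‖q.2 - q.1.2‖ * ‖f q.1‖ ≤ ‖q.2 - q.1.2‖ * 1 :=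
            mul_le_mul_of_nonneg_left h1 (norm_nonneg _)
        _ = ‖q.2 - q.1.2‖ := mul_one _
  have hdisint : ∫ a, (∫ y, (y - a.2) * f a ∂κ a) ∂ρ.fst = 0 := by
    rw [← hρint]
    exact Measure.integral_condKernel hFint
  have habs : ∫ a, |g a| ∂ρ.fst = 0 := by
    rw [← hdisint]
    refine integral_congr_ae (Filter.Eventually.of_forall fun a => ?_)
    show |g a| = ∫ y, (y - a.2) * f a ∂κ a
    have hmr : (∫ y, (y - a.2) * f a ∂κ a) = (∫ y, (y - a.2) ∂κ a) * f a :=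
      integral_mul_const (f a) (fun y => y - a.2)
    rw [hmr]
    simp only [hfdef, hgdef]
    split_ifs with h
    · rw [mul_one, abs_of_nonneg h]
    · rw [mul_neg_one, abs_of_neg (not_le.mp h)]
  have hgint : Integrable g ρ.fst := hInt.integral_condKernel
  have hg0 : ∀ᵐ a ∂ρ.fst, g a = 0 := by
    have h := (integral_eq_zero_iff_of_nonneg (fun a => abs_nonneg (g a)) hgint.abs).mp habs
    filter_upwards [h] with a ha
    exact abs_eq_zero.mp (by simpa using ha)
  have hslice : ∀ᵐ a ∂ρ.fst, Integrable (fun y => y - a.2) (κ a) := hInt.condKernel_ae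
  -- extraction of points of Γ from positive-measure sets
  have hpt : ∀ (c : ℝ × ℝ) (s : Set ℝ), κ c {y | (c.1, c.2, y) ∈ Γ} = 1 →
      κ c s ≠ 0 → ∃ y ∈ s, (c.1, c.2, y) ∈ Γ := by
    intro c s hc hs
    by_contra hcon
    push_neg at hcon
    apply hs
    have hsub : s ⊆ {y : ℝ | (c.1, c.2, y) ∈ Γ}ᶜ := fun y hy => hcon y hy
    refine measure_mono_null hsub ?_
    have hmeasfib : MeasurableSet {y : ℝ | (c.1, c.2, y) ∈ Γ} :=
      hΓmeas.preimage (measurable_const.prodMk (measurable_const.prodMk measurable_id))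
    haveI : IsProbabilityMeasure (κ c) := inferInstance
    exact (prob_compl_eq_zero_iff hmeasfib).mpr hc
  -- bad quadruple sets are null
  set D : ℚ × ℚ × ℚ × ℚ → Set (ℝ × ℝ) := fun q =>
    {a : ℝ × ℝ | κ a {y | (a.1, a.2, y) ∈ Γ} = 1 ∧ q.1 < q.2.1 ∧ q.2.1 ≤ q.2.2.1 ∧
      q.2.2.1 < q.2.2.2 ∧
      κ a (Set.Iic (q.1 : ℝ)) ≠ 0 ∧ κ a (Set.Icc (q.2.1 : ℝ) (q.2.2.1 : ℝ)) ≠ 0 ∧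
      κ a (Set.Ici (q.2.2.2 : ℝ)) ≠ 0} with hD
  have hDnull : ∀ q, ρ.fst (D q) = 0 := by
    intro q
    rcases Set.eq_empty_or_nonempty (D q) with h | h
    · rw [h]; exact measure_empty
    · obtain ⟨a₀, ha₀⟩ := h
      have key : ∀ b b' : ℝ × ℝ, b ∈ D q → b' ∈ D q → ¬ b.1 < b'.1 := by
        intro b b' hb hb' hlt
        obtain ⟨hbfib, h12, h23, h34, hb1, hb2, hb3⟩ := hb
        obtain ⟨hb'fib, _, _, _, _, hb'2, _⟩ := hb'
        obtain ⟨ym, hym, hymΓ⟩ := hpt b _ hbfib hb1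
        obtain ⟨yp, hyp, hypΓ⟩ := hpt b _ hbfib hb3
        obtain ⟨y', hy', hy'Γ⟩ := hpt b' _ hb'fib hb'2
        refine hΓ b.1 b'.1 b.2 b'.2 ym yp y' hlt hymΓ hypΓ hy'Γ ?_
        constructor
        · calc ym ≤ (q.1 : ℝ) := hym
            _ < (q.2.1 : ℝ) := by exact_mod_cast h12
            _ ≤ y' := hy'.1
        · calc y' ≤ (q.2.2.1 : ℝ) := hy'.2
            _ < (q.2.2.2 : ℝ) := by exact_mod_cast h34
            _ ≤ yp := hyp
      have hsub : D q ⊆ Prod.fst ⁻¹' {a₀.1} := by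
        intro a ha
        have : a.1 = a₀.1 := by
          rcases lt_trichotomy a.1 a₀.1 with h | h | h
          · exact absurd h (key a a₀ ha ha₀)
          · exact h
          · exact absurd h (key a₀ a ha₀ ha)
        exact Set.mem_preimage.mpr (Set.mem_singleton_iff.mpr this)
      refine measure_mono_null hsub ?_
      rw [hfst]
      have hμh1 : μh (Prod.fst ⁻¹' {a₀.1}) = (volume.restrict (Set.Icc (0:ℝ) 1)) {a₀.1} := by
        rw [← hlift₁, Measure.map_apply measurable_fst (measurableSet_singleton _)]
      rw [hμh1, Measure.restrict_apply (measurableSet_singleton _)]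
      exact measure_mono_null Set.inter_subset_left Real.volume_singleton
  have hNae : ∀ᵐ a ∂ρ.fst, ∀ q : ℚ × ℚ × ℚ × ℚ, a ∉ D q := by
    have h0 : ρ.fst (⋃ q, D q) = 0 := measure_iUnion_null hDnull
    rw [← compl_mem_ae_iff] at h0
    filter_upwards [h0] with a ha
    intro q hq
    exact ha (Set.mem_iUnion.mpr ⟨q, hq⟩)
  -- the pointwise two-graph property
  have hone : ∀ᵐ a ∂ρ.fst, κ a {y : ℝ | y = Tup a ∨ y = Tdown a} = 1 := by
    filter_upwards [hfib, hg0, hslice, hNae] with a hafib hag haint haN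
    haveI : IsProbabilityMeasure (κ a) := inferInstance
    have hquad : ∀ q1 q2 q3 q4 : ℚ, q1 < q2 → q2 ≤ q3 → q3 < q4 →
        κ a (Set.Iic (q1 : ℝ)) = 0 ∨ κ a (Set.Icc (q2 : ℝ) (q3 : ℝ)) = 0 ∨
        κ a (Set.Ici (q4 : ℝ)) = 0 := by
      intro q1 q2 q3 q4 h12 h23 h34
      by_contra hcon
      push_neg at hcon
      exact haN (q1, q2, q3, q4) ⟨hafib, h12, h23, h34, hcon.1, hcon.2.1, hcon.2.2⟩
    have hbar : ∫ y, (y - a.2) ∂κ a = 0 := hag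
    obtain ⟨hup, hdown, hmid⟩ := twoPoint (κ a) a.2 hquad haint hbar
    have hA1 : κ a (Set.Ioi a.2 \ {Tup a}) = 0 := by
      by_cases h : κ a (Set.Ioi a.2) = 0
      · exact measure_mono_null Set.diff_subset h
      · obtain ⟨b, hxb, hb0⟩ := hup h
        have hval := upValue (κ a) hxb h hb0
        have hTb : Tup a = b := by
          simp only [hTup]
          exact hval
        rw [hTb]
        exact hb0
    have hA2 : κ a (Set.Iio a.2 \ {Tdown a}) = 0 := by
      by_cases h : κ a (Set.Iio a.2) = 0
      · exact measure_mono_null Set.diff_subset h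
      · obtain ⟨b, hxb, hb0⟩ := hdown h
        have hval := downValue (κ a) hxb h hb0
        have hTb : Tdown a = b := by
          simp only [hTdown]
          exact hval
        rw [hTb]
        exact hb0
    have hA3 : κ a ({a.2} \ ({Tup a} ∪ {Tdown a})) = 0 := by
      by_cases h : κ a {a.2} = 0
      · exact measure_mono_null Set.diff_subset h
      · rcases hmid h with h' | h'
        · have hT : Tup a = a.2 := by
            simp only [hTup]
            rw [h']
            simp
          have hempty : ({a.2} : Set ℝ) \ ({Tup a} ∪ {Tdown a}) = ∅ := by
            rw [hT]
            ext z
            simp (config := { contextual := true })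
          rw [hempty]
          exact measure_empty
        · have hT : Tdown a = a.2 := by
            simp only [hTdown]
            rw [h']
            simp
          have hempty : ({a.2} : Set ℝ) \ ({Tup a} ∪ {Tdown a}) = ∅ := by
            rw [hT]
            ext z
            simp (config := { contextual := true })
          rw [hempty]
          exact measure_empty
    have hmeasTT : MeasurableSet {y : ℝ | y = Tup a ∨ y = Tdown a} := by
      have : {y : ℝ | y = Tup a ∨ y = Tdown a} = {Tup a} ∪ {Tdown a} := by
        rw [Set.setOf_or, Set.setOf_eq_eq_singleton, Set.setOf_eq_eq_singleton]
      rw [this]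
      exact (measurableSet_singleton _).union (measurableSet_singleton _)
    have hcompl : κ a ({y : ℝ | y = Tup a ∨ y = Tdown a}ᶜ) = 0 := by
      have hsub : {y : ℝ | y = Tup a ∨ y = Tdown a}ᶜ ⊆
          (Set.Ioi a.2 \ {Tup a}) ∪ (Set.Iio a.2 \ {Tdown a}) ∪
            ({a.2} \ ({Tup a} ∪ {Tdown a})) := by
        intro y hy
        simp only [Set.mem_compl_iff, Set.mem_setOf_eq, not_or] at hy
        obtain ⟨h1, h2⟩ := hy
        rcases lt_trichotomy y a.2 with h | h | h
        · exact Or.inl (Or.inr ⟨h, h2⟩)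
        · refine Or.inr ⟨by simp [h], ?_⟩
          intro hc
          rcases hc with hc | hc
          · exact h1 hc
          · exact h2 hc
        · exact Or.inl (Or.inl ⟨h, h1⟩)
      refine measure_mono_null hsub ?_
      exact measure_union_null (measure_union_null hA1 hA2) hA3
    exact (prob_compl_eq_zero_iff hmeasTT).mp hcompl
  -- conclude
  refine ⟨Tup, Tdown, hTupMeas, hTdownMeas, hbound, ?_⟩
  have hSmeas : MeasurableSet {q : (ℝ × ℝ) × ℝ | q.2 = Tup q.1 ∨ q.2 = Tdown q.1} := by
    rw [Set.setOf_or]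
    exact (measurableSet_eq_fun measurable_snd (hTupMeas.comp measurable_fst)).union
      (measurableSet_eq_fun measurable_snd (hTdownMeas.comp measurable_fst))
  have hkey : πh {p : ℝ × ℝ × ℝ | p.2.2 = Tup (p.1, p.2.1) ∨ p.2.2 = Tdown (p.1, p.2.1)}
      = ρ {q : (ℝ × ℝ) × ℝ | q.2 = Tup q.1 ∨ q.2 = Tdown q.1} := by
    rw [hρ, MeasurableEquiv.map_apply]
    rfl
  rw [hkey, ← Measure.lintegral_condKernel_mem hSmeas]
  have hcongr : ∫⁻ a, ρ.condKernel a
      {y | (a, y) ∈ {q : (ℝ × ℝ) × ℝ | q.2 = Tup q.1 ∨ q.2 = Tdown q.1}} ∂ρ.fst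
      = ∫⁻ _, 1 ∂ρ.fst := by
    refine lintegral_congr_ae ?_
    filter_upwards [hone] with a ha
    exact ha
  rw [hcongr, lintegral_one, hfst, hμhuniv]
end

section
/- Let μ ≤_s ν (stochastic order) be probability measures on ℝ with finite first moments. Define the stochastic shadow of a submeasure μ' ≤ μ (setwise) in ν as the ≤_s-smallest measure η with μ' ≤_s η and η ≤ ν. Then for the curve μ_{[0,u]} = (G_μ)_#(λ restricted to [0,u]), the stochastic shadow of μ_{[0,u]} in ν equals (G_ν)_#(λ restricted to [0,u]); i.e. it is the corresponding lower quantile portion of ν, independently of the internal structure of μ_{[0,u]} beyond its mass. -/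
open MeasureTheory

/-- Stochastic order on finite measures: `∫ f dμ ≤ ∫ f dν` for every increasing `f` for
which both integrals exist. -/
def StochOrder (μ ν : Measure ℝ) : Prop :=
  ∀ f : ℝ → ℝ, Monotone f → Integrable f μ → Integrable f ν →
    ∫ x, f x ∂μ ≤ ∫ x, f x ∂ν

/-- `η` is the stochastic shadow of `μ'` in `ν`: the `≤_s`-smallest measure `η` with
`μ' ≤_s η` and `η ≤ ν`. -/
def IsStochShadow (μ' ν η : Measure ℝ) : Prop :=
  StochOrder μ' η ∧ η ≤ ν ∧
    ∀ η' : Measure ℝ, StochOrder μ' η' → η' ≤ ν → StochOrder η η'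

section Aux

lemma lint_mono_of_upper (α β : Measure ℝ) (g : ℝ → ℝ) (hgm : Measurable g)
    (hnn : 0 ≤ g)
    (hupg : ∀ t : ℝ, α {x | t < g x} ≤ β {x | t < g x}) :
    ∫⁻ x, ENNReal.ofReal (g x) ∂α ≤ ∫⁻ x, ENNReal.ofReal (g x) ∂β := by
  rw [lintegral_eq_lintegral_meas_lt α (Filter.Eventually.of_forall hnn) hgm.aemeasurable,
    lintegral_eq_lintegral_meas_lt β (Filter.Eventually.of_forall hnn) hgm.aemeasurable]
  exact lintegral_mono fun t => hupg t

lemma int_mono_of_upper (α β : Measure ℝ) (g : ℝ → ℝ) (hgm : Measurable g)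
    (hnn : 0 ≤ g) (hib : Integrable g β)
    (hupg : ∀ t : ℝ, α {x | t < g x} ≤ β {x | t < g x}) :
    ∫ x, g x ∂α ≤ ∫ x, g x ∂β := by
  rw [integral_eq_lintegral_of_nonneg_ae (Filter.Eventually.of_forall hnn)
      hgm.aestronglyMeasurable,
    integral_eq_lintegral_of_nonneg_ae (Filter.Eventually.of_forall hnn)
      hgm.aestronglyMeasurable]
  have hfin : ∫⁻ x, ENNReal.ofReal (g x) ∂β ≠ ⊤ := by
    refine ne_of_lt (lt_of_le_of_lt ?_ hib.hasFiniteIntegral)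
    exact lintegral_mono fun x => Real.ofReal_le_enorm (g x)
  exact ENNReal.toReal_mono hfin (lint_mono_of_upper α β g hgm hnn hupg)

lemma lower_of_upper (α β : Measure ℝ) [IsFiniteMeasure α] [IsFiniteMeasure β]
    (hmass : α Set.univ = β Set.univ)
    (hup : ∀ s : Set ℝ, IsUpperSet s → MeasurableSet s → α s ≤ β s)
    (s : Set ℝ) (hs : IsLowerSet s) (hsm : MeasurableSet s) : β s ≤ α s := by
  have h1 : α sᶜ ≤ β sᶜ := hup _ hs.compl hsm.compl
  have h2 : α s + α sᶜ = β s + β sᶜ := by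
    rw [measure_add_measure_compl hsm, measure_add_measure_compl hsm, hmass]
  have h3 : β s + α sᶜ ≤ α s + α sᶜ := by
    rw [h2]; exact add_le_add le_rfl h1
  exact (ENNReal.add_le_add_iff_right (measure_ne_top α sᶜ)).mp h3

/-- Equal mass plus domination on upper sets implies stochastic order. -/
lemma masterA (α β : Measure ℝ) [IsFiniteMeasure α] [IsFiniteMeasure β]
    (hmass : α Set.univ = β Set.univ)
    (hup : ∀ s : Set ℝ, IsUpperSet s → MeasurableSet s → α s ≤ β s) :
    StochOrder α β := by
  intro f hf hfα hfβ
  set g : ℝ → ℝ := fun x => max (f x) 0 with hgdef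
  set h : ℝ → ℝ := fun x => max (-f x) 0 with hhdef
  have hgm : Measurable g := hf.measurable.max measurable_const
  have hhm : Measurable h := hf.measurable.neg.max measurable_const
  have hfg : ∀ x, f x = g x - h x := fun x =>
    (max_zero_sub_max_neg_zero_eq_self (f x)).symm
  have hgnn : 0 ≤ g := fun x => le_max_right _ _
  have hhnn : 0 ≤ h := fun x => le_max_right _ _
  have h1 : ∫ x, g x ∂α ≤ ∫ x, g x ∂β := by
    refine int_mono_of_upper α β g hgm hgnn hfβ.pos_part fun t => ?_
    refine hup _ (fun x y hxy hx => lt_of_lt_of_le hx (max_le_max (hf hxy) le_rfl)) ?_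
    exact measurableSet_lt measurable_const hgm
  have h2 : ∫ x, h x ∂β ≤ ∫ x, h x ∂α := by
    refine int_mono_of_upper β α h hhm hhnn hfα.neg_part fun t => ?_
    refine lower_of_upper α β hmass hup _ (fun x y hxy hx => ?_) ?_
    · exact lt_of_lt_of_le hx (max_le_max (neg_le_neg (hf hxy)) le_rfl)
    · exact measurableSet_lt measurable_const hhm
  calc ∫ x, f x ∂α = ∫ x, g x ∂α - ∫ x, h x ∂α := by
        rw [← integral_sub hfα.pos_part hfα.neg_part]
        exact integral_congr_ae (Filter.Eventually.of_forall fun x => hfg x)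
    _ ≤ ∫ x, g x ∂β - ∫ x, h x ∂β := sub_le_sub h1 h2
    _ = ∫ x, f x ∂β := by
        rw [← integral_sub hfβ.pos_part hfβ.neg_part]
        exact (integral_congr_ae (Filter.Eventually.of_forall fun x => hfg x)).symm

lemma stoch_mass (α β : Measure ℝ) [IsFiniteMeasure α] [IsFiniteMeasure β]
    (h : StochOrder α β) : α Set.univ = β Set.univ := by
  have h1 := h (fun _ => (1:ℝ)) monotone_const (integrable_const 1) (integrable_const 1)
  have h2 := h (fun _ => (-1:ℝ)) monotone_const (integrable_const _) (integrable_const _)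
  simp only [integral_const, smul_eq_mul, mul_one, mul_neg, neg_le_neg_iff] at h1 h2
  have := le_antisymm h1 h2
  exact (ENNReal.toReal_eq_toReal_iff' (measure_ne_top α _) (measure_ne_top β _)).mp this

lemma stoch_Ici (α β : Measure ℝ) [IsFiniteMeasure α] [IsFiniteMeasure β]
    (h : StochOrder α β) (x : ℝ) : α (Set.Ici x) ≤ β (Set.Ici x) := by
  have hmono : Monotone ((Set.Ici x).indicator (1 : ℝ → ℝ)) := by
    intro a b hab
    by_cases ha : a ∈ Set.Ici x
    · rw [Set.indicator_of_mem ha, Set.indicator_of_mem (show b ∈ Set.Ici x from le_trans ha hab)]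
      exact le_rfl
    · rw [Set.indicator_of_notMem ha]
      exact Set.indicator_nonneg (fun _ _ => zero_le_one) b
  have h1 := h _ hmono ((integrable_const 1).indicator measurableSet_Ici)
    ((integrable_const 1).indicator measurableSet_Ici)
  rw [integral_indicator_one measurableSet_Ici, integral_indicator_one measurableSet_Ici] at h1
  exact (ENNReal.toReal_le_toReal (measure_ne_top α _) (measure_ne_top β _)).mp h1

lemma stoch_Iio (α β : Measure ℝ) [IsProbabilityMeasure α] [IsProbabilityMeasure β]
    (h : StochOrder α β) (x : ℝ) : β (Set.Iio x) ≤ α (Set.Iio x) := by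
  have h1 := stoch_Ici α β h x
  have h2 : β (Set.Iio x) = 1 - β (Set.Ici x) := by
    rw [← Set.compl_Ici, measure_compl measurableSet_Ici (measure_ne_top β _), measure_univ]
  have h3 : α (Set.Iio x) = 1 - α (Set.Ici x) := by
    rw [← Set.compl_Ici, measure_compl measurableSet_Ici (measure_ne_top α _), measure_univ]
  rw [h2, h3]
  exact tsub_le_tsub_left h1 1

lemma map_restrict_apply (G : ℝ → ℝ) (hG : Measurable G) (s A : Set ℝ)
    (hA : MeasurableSet A) :
    ((volume.restrict s).map G) A = volume (G ⁻¹' A ∩ s) := by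
  rw [Measure.map_apply hG hA, Measure.restrict_apply (hG hA)]

lemma quantile_le (μ ν : Measure ℝ)
    [IsProbabilityMeasure μ] [IsProbabilityMeasure ν]
    (hμν : StochOrder μ ν)
    (Gμ Gν : ℝ → ℝ) (hGμ : Monotone Gμ) (hGν : Monotone Gν)
    (hGμl : ∀ t : ℝ, ContinuousWithinAt Gμ (Set.Iio t) t)
    (hGμν : (volume.restrict (Set.Ioo (0:ℝ) 1)).map Gμ = μ)
    (hGνν : (volume.restrict (Set.Ioo (0:ℝ) 1)).map Gν = ν) :
    ∀ t ∈ Set.Ioo (0:ℝ) 1, Gμ t ≤ Gν t := by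
  intro t ht
  by_contra hcon
  push_neg at hcon
  have hev1 : ∀ᶠ s in nhdsWithin t (Set.Iio t), Gν t < Gμ s :=
    (hGμl t).eventually (eventually_gt_nhds hcon)
  have hev2 : ∀ᶠ s in nhdsWithin t (Set.Iio t), s ∈ Set.Ioo 0 t :=
    Ioo_mem_nhdsLT_of_mem ⟨ht.1, le_rfl⟩
  obtain ⟨t', ht'1, ht'2⟩ := (hev1.and hev2).exists
  set x := Gμ t' with hx
  have hB : μ (Set.Iio x) ≤ ENNReal.ofReal t' := by
    rw [← hGμν, map_restrict_apply Gμ hGμ.measurable _ _ measurableSet_Iio]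
    have hsub : Gμ ⁻¹' Set.Iio x ∩ Set.Ioo 0 1 ⊆ Set.Ioo 0 t' := by
      rintro s ⟨hs1, hs2⟩
      refine ⟨hs2.1, ?_⟩
      by_contra hge
      push_neg at hge
      exact absurd (hGμ hge) (not_le.mpr hs1)
    calc volume (Gμ ⁻¹' Set.Iio x ∩ Set.Ioo 0 1) ≤ volume (Set.Ioo 0 t') :=
          measure_mono hsub
      _ = ENNReal.ofReal t' := by rw [Real.volume_Ioo, sub_zero]
  have hC : ENNReal.ofReal t ≤ ν (Set.Iio x) := by
    rw [← hGνν, map_restrict_apply Gν hGν.measurable _ _ measurableSet_Iio]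
    have hsub : Set.Ioo 0 t ⊆ Gν ⁻¹' Set.Iio x ∩ Set.Ioo 0 1 := by
      rintro s ⟨hs1, hs2⟩
      exact ⟨lt_of_le_of_lt (hGν hs2.le) ht'1, hs1, hs2.trans ht.2⟩
    calc ENNReal.ofReal t = volume (Set.Ioo 0 t) := by rw [Real.volume_Ioo, sub_zero]
      _ ≤ _ := measure_mono hsub
  have : ENNReal.ofReal t ≤ ENNReal.ofReal t' :=
    hC.trans ((stoch_Iio μ ν hμν x).trans hB)
  rw [ENNReal.ofReal_le_ofReal_iff ht'2.1.le] at this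
  exact absurd this (not_le.mpr ht'2.2)

end Aux

/-- For `μ ≤_s ν` with quantile functions `G_μ, G_ν`, the stochastic shadow of
`μ_{[0,u]} = (G_μ)_# λ|_{[0,u]}` in `ν` is `(G_ν)_# λ|_{[0,u]}`, the lower quantile
portion of `ν`. -/
theorem stochastic_shadow_is_quantile (μ ν : Measure ℝ)
    [IsProbabilityMeasure μ] [IsProbabilityMeasure ν]
    (hμ : Integrable (fun x : ℝ => x) μ) (hν : Integrable (fun x : ℝ => x) ν)
    (hμν : StochOrder μ ν)
    (Gμ Gν : ℝ → ℝ) (hGμ : Monotone Gμ) (hGν : Monotone Gν)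
    (hGμl : ∀ t : ℝ, ContinuousWithinAt Gμ (Set.Iio t) t)
    (hGνl : ∀ t : ℝ, ContinuousWithinAt Gν (Set.Iio t) t)
    (hGμν : (volume.restrict (Set.Ioo (0:ℝ) 1)).map Gμ = μ)
    (hGνν : (volume.restrict (Set.Ioo (0:ℝ) 1)).map Gν = ν) :
    ∀ u ∈ Set.Icc (0:ℝ) 1,
      IsStochShadow ((volume.restrict (Set.Ioo 0 u)).map Gμ) ν
        ((volume.restrict (Set.Ioo 0 u)).map Gν) := by
  intro u hu
  obtain ⟨hu0, hu1⟩ := hu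
  set μu : Measure ℝ := (volume.restrict (Set.Ioo 0 u)).map Gμ with hμu
  set νu : Measure ℝ := (volume.restrict (Set.Ioo 0 u)).map Gν with hνu
  have hGQ : ∀ t ∈ Set.Ioo (0:ℝ) 1, Gμ t ≤ Gν t :=
    quantile_le μ ν hμν Gμ Gν hGμ hGν hGμl hGμν hGνν
  have hμu_apply : ∀ A : Set ℝ, MeasurableSet A → μu A = volume (Gμ ⁻¹' A ∩ Set.Ioo 0 u) :=
    fun A hA => map_restrict_apply Gμ hGμ.measurable _ _ hA
  have hνu_apply : ∀ A : Set ℝ, MeasurableSet A → νu A = volume (Gν ⁻¹' A ∩ Set.Ioo 0 u) :=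
    fun A hA => map_restrict_apply Gν hGν.measurable _ _ hA
  have hμu_univ : μu Set.univ = ENNReal.ofReal u := by
    rw [hμu_apply _ MeasurableSet.univ, Set.preimage_univ, Set.univ_inter,
      Real.volume_Ioo, sub_zero]
  have hνu_univ : νu Set.univ = ENNReal.ofReal u := by
    rw [hνu_apply _ MeasurableSet.univ, Set.preimage_univ, Set.univ_inter,
      Real.volume_Ioo, sub_zero]
  haveI : IsFiniteMeasure μu := ⟨by rw [hμu_univ]; exact ENNReal.ofReal_lt_top⟩
  haveI : IsFiniteMeasure νu := ⟨by rw [hνu_univ]; exact ENNReal.ofReal_lt_top⟩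
  -- upper set inequality for νu against any η' ≤ ν of mass u
  refine ⟨?_, ?_, ?_⟩
  · -- μu ≤_s νu
    refine masterA μu νu (by rw [hμu_univ, hνu_univ]) fun s hs hsm => ?_
    rw [hμu_apply _ hsm, hνu_apply _ hsm]
    refine measure_mono fun t ⟨ht1, ht2⟩ => ?_
    have htI : t ∈ Set.Ioo (0:ℝ) 1 := ⟨ht2.1, lt_of_lt_of_le ht2.2 hu1⟩
    exact ⟨hs (hGQ t htI) ht1, ht2⟩
  · -- νu ≤ ν
    rw [← hGνν]
    exact Measure.map_mono
      (Measure.restrict_mono (Set.Ioo_subset_Ioo le_rfl hu1) le_rfl) hGν.measurable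
  · -- minimality
    intro η' h1 h2
    haveI : IsFiniteMeasure η' :=
      ⟨lt_of_le_of_lt (Measure.le_iff'.mp h2 Set.univ) (by simp)⟩
    have hη'_univ : η' Set.univ = ENNReal.ofReal u := by
      rw [← stoch_mass μu η' h1, hμu_univ]
    refine masterA νu η' (by rw [hνu_univ, hη'_univ]) fun s hs hsm => ?_
    rw [hνu_apply _ hsm]
    by_cases hempty : Gν ⁻¹' s ∩ Set.Ioo 0 u = ∅
    · rw [hempty]; simp
    · obtain ⟨t0, ht01, ht02⟩ := Set.nonempty_iff_ne_empty.mpr hempty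
      have hu0' : (0:ℝ) < u := lt_trans ht02.1 ht02.2
      -- [u,1) maps into s
      have hsubIco : Set.Ico u 1 ⊆ Gν ⁻¹' s ∩ Set.Ioo 0 1 := by
        rintro t ⟨htu, ht1⟩
        refine ⟨hs (hGν (le_of_lt (lt_of_lt_of_le ht02.2 htu))) ht01,
          lt_of_lt_of_le hu0' htu, ht1⟩
      have key : volume (Gν ⁻¹' s ∩ Set.Ioo 0 u) + ENNReal.ofReal (1 - u) ≤ ν s := by
        rw [← hGνν, map_restrict_apply Gν hGν.measurable _ _ hsm]
        have hdisj : Disjoint (Gν ⁻¹' s ∩ Set.Ioo 0 u) (Set.Ico u 1) := by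
          refine Set.disjoint_left.mpr fun t ht htmem => ?_
          exact absurd htmem.1 (not_le.mpr ht.2.2)
        have hunion : (Gν ⁻¹' s ∩ Set.Ioo 0 u) ∪ Set.Ico u 1 ⊆ Gν ⁻¹' s ∩ Set.Ioo 0 1 := by
          rintro t (⟨ht1, ht2⟩ | ht)
          · exact ⟨ht1, ht2.1, lt_of_lt_of_le ht2.2 hu1⟩
          · exact hsubIco ht
        calc volume (Gν ⁻¹' s ∩ Set.Ioo 0 u) + ENNReal.ofReal (1 - u)
            = volume ((Gν ⁻¹' s ∩ Set.Ioo 0 u) ∪ Set.Ico u 1) := by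
              rw [measure_union hdisj measurableSet_Ico, Real.volume_Ico]
          _ ≤ volume (Gν ⁻¹' s ∩ Set.Ioo 0 1) := measure_mono hunion
      set a := volume (Gν ⁻¹' s ∩ Set.Ioo 0 u) with ha
      have hau : a ≤ ENNReal.ofReal u := by
        calc a ≤ volume (Set.Ioo 0 u) := measure_mono Set.inter_subset_right
          _ = ENNReal.ofReal u := by rw [Real.volume_Ioo, sub_zero]
      have hofReal : ENNReal.ofReal (1 - u) = 1 - ENNReal.ofReal u := by
        rw [ENNReal.ofReal_sub 1 hu0, ENNReal.ofReal_one]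
      have hνs_compl : ν sᶜ = 1 - ν s := by
        rw [measure_compl hsm (measure_ne_top ν s), measure_univ]
      -- step 1 : ofReal u ≤ η' s + (1 - ν s)
      have step1 : ENNReal.ofReal u ≤ η' s + (1 - ν s) := by
        calc ENNReal.ofReal u = η' Set.univ := hη'_univ.symm
          _ = η' s + η' sᶜ := (measure_add_measure_compl hsm).symm
          _ ≤ η' s + ν sᶜ := add_le_add le_rfl (Measure.le_iff'.mp h2 sᶜ)
          _ = η' s + (1 - ν s) := by rw [hνs_compl]
      -- step 2 : a + (1 - ν s) ≤ ofReal u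
      have step2 : a + (1 - ν s) ≤ ENNReal.ofReal u := by
        have h4 : (1 : ENNReal) - ν s ≤ 1 - (a + ENNReal.ofReal (1 - u)) :=
          tsub_le_tsub_left key 1
        have h5 : (1 : ENNReal) - (a + ENNReal.ofReal (1 - u)) = ENNReal.ofReal u - a := by
          rw [hofReal, add_comm, tsub_add_eq_tsub_tsub,
            ENNReal.sub_sub_cancel ENNReal.one_ne_top (ENNReal.ofReal_le_one.mpr hu1)]
        calc a + (1 - ν s) ≤ a + (ENNReal.ofReal u - a) :=
              add_le_add le_rfl (h4.trans_eq h5)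
          _ = ENNReal.ofReal u := add_tsub_cancel_of_le hau
      have hfin : (1 : ENNReal) - ν s ≠ ⊤ :=
        (tsub_le_self.trans_lt ENNReal.one_lt_top).ne
      exact (ENNReal.add_le_add_iff_right hfin).mp (step2.trans step1)
end
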